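/- arXiv:0911.1726 — 4 statements merged into one kernel-verified Lean document; each statement's English description precedes it below -/
import Mathlib

section
/- Let J ⊂ ℝ be an open interval and let u ∈ H^{3/2}(J). Then |u|²_{H^{3/2}(J)} ≤ (1/8)·|u'|²_{H^{1/2}(J)}. -/
open MeasureTheory Set Filter Topology ENNReal

noncomputable section

/-- Squared Gagliardo `H^{1/2}` seminorm of `g` over the set `s ⊆ ℝ`. -/
def halfSemi (g : ℝ → ℝ) (s : Set ℝ) : ℝ≥0∞ :=
  ∫⁻ p in s ×ˢ s, ENNReal.ofReal ((g p.1 - g p.2) ^ 2 / (p.1 - p.2) ^ 2)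

/-- `f ∈ H²_loc(ℝ)`, encoded through a concrete derivative `f'` and a second
derivative `f''` which is the (locally integrable) a.e. derivative of `f'`. -/
def IsH2Profile (f f' f'' : ℝ → ℝ) : Prop :=
  (∀ t : ℝ, HasDerivAt f (f' t) t) ∧
  (∀ s t : ℝ, IntervalIntegrable f'' volume s t) ∧
  (∀ s t : ℝ, f' t - f' s = ∫ x in s..t, f'' x)

/-- `f ∈ H²_loc` on the set `s`. -/
def IsH2ProfileOn (s : Set ℝ) (f f' f'' : ℝ → ℝ) : Prop :=
  (∀ t ∈ s, HasDerivAt f (f' t) t) ∧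
  (∀ r ∈ s, ∀ t ∈ s, IntervalIntegrable f'' volume r t ∧ f' t - f' r = ∫ x in r..t, f'' x)

/-- `f` locally absolutely continuous with derivative `f'` (the `H^{3/2}_loc` model:
`f'` is the a.e. derivative of `f`). -/
def IsACProfile (f f' : ℝ → ℝ) : Prop :=
  (∀ s t : ℝ, IntervalIntegrable f' volume s t) ∧
  (∀ s t : ℝ, f t - f s = ∫ x in s..t, f' x)

/-- The optimal interior transition energy `m`. -/
def mConst (W : ℝ → ℝ) (a b : ℝ) : ℝ :=
  sInf {e : ℝ | ∃ (f f' f'' : ℝ → ℝ) (R : ℝ), 0 < R ∧ IsH2Profile f f' f'' ∧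
    (∀ t : ℝ, R ≤ t → f (-t) = a ∧ f t = b) ∧
    (∫⁻ t in Ioo (-R) R, ENNReal.ofReal (W (f t) + f'' t ^ 2)) ≠ ⊤ ∧
    e = (∫⁻ t in Ioo (-R) R, ENNReal.ofReal (W (f t) + f'' t ^ 2)).toReal}

/-- The optimal boundary/interior interaction energy `σ(z, ξ)`. -/
def sigmaConst (W : ℝ → ℝ) (z ξ : ℝ) : ℝ :=
  sInf {e : ℝ | ∃ (f f' f'' : ℝ → ℝ) (R : ℝ), 0 < R ∧
    IsH2ProfileOn (Ioi 0) f f' f'' ∧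
    ContinuousWithinAt f (Ici 0) 0 ∧ f 0 = ξ ∧
    (∀ t : ℝ, R ≤ t → f t = z) ∧
    (∫⁻ t in Ioo 0 R, ENNReal.ofReal (W (f t) + f'' t ^ 2)) ≠ ⊤ ∧
    e = (∫⁻ t in Ioo 0 R, ENNReal.ofReal (W (f t) + f'' t ^ 2)).toReal}

/-- Admissible class for the lower boundary-transition constant `c̲`. -/
def cLowSet (V : ℝ → ℝ) (α β : ℝ) : Set ℝ :=
  {e : ℝ | ∃ (f f' : ℝ → ℝ) (R : ℝ), 0 < R ∧ IsACProfile f f' ∧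
    halfSemi f' univ ≠ ⊤ ∧
    (∀ t : ℝ, R ≤ t → f (-t) = α ∧ f t = β) ∧
    e = (1 / 8) * (halfSemi f' (Ioo (-R) R)).toReal + ∫ x in Ioo (-R) R, V (f x)}

/-- The lower boundary-transition constant `c̲`. -/
def cLow (V : ℝ → ℝ) (α β : ℝ) : ℝ := sInf (cLowSet V α β)

/-- Admissible class for the upper boundary-transition constant `c̄`. -/
def cUpSet (V : ℝ → ℝ) (α β : ℝ) : Set ℝ :=
  {e : ℝ | ∃ (f f' : ℝ → ℝ) (R : ℝ), 0 < R ∧ IsACProfile f f' ∧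
    halfSemi f' univ ≠ ⊤ ∧
    (∀ t : ℝ, R ≤ t → f (-t) = α ∧ f t = β) ∧
    e = (7 / 16) * (halfSemi f' univ).toReal + ∫ x, V (f x)}

/-- The upper boundary-transition constant `c̄`. -/
def cUp (V : ℝ → ℝ) (α β : ℝ) : ℝ := sInf (cUpSet V α β)

/-- Hypotheses (H^W) on the interior double-well potential. -/
def HypW (W : ℝ → ℝ) (a b : ℝ) : Prop :=
  Continuous W ∧ (∀ z, 0 ≤ W z) ∧ a < b ∧ (∀ z, W z = 0 ↔ z = a ∨ z = b) ∧
  ∃ C > (0:ℝ), ∀ z : ℝ, C * |z| ^ 2 - 1 / C ≤ W z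

/-- Hypotheses (H^V) on the boundary double-well potential. -/
def HypV (V : ℝ → ℝ) (α β : ℝ) : Prop :=
  Continuous V ∧ (∀ z, 0 ≤ V z) ∧ α < β ∧ (∀ z, V z = 0 ↔ z = α ∨ z = β) ∧
  (∃ C > (0:ℝ), ∀ z : ℝ, C * |z| ^ 2 - 1 / C ≤ V z) ∧
  ∃ C > (0:ℝ), ∃ ρ > (0:ℝ), ∀ z : ℝ,
    z ∈ Ioo (α - ρ) (α + ρ) ∪ Ioo (β - ρ) (β + ρ) →
      (1 / C) * min |z - α| |z - β| ^ 2 ≤ V z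


/-- The one-dimensional interior energy `F_ε(u; I)` on the `H²` class
(written with lower integrals of the nonnegative integrands). -/
def F1D (W : ℝ → ℝ) (ε : ℝ) (u u'' : ℝ → ℝ) (I : Set ℝ) : ℝ≥0∞ :=
  ENNReal.ofReal (ε ^ 3) * ∫⁻ x in I, ENNReal.ofReal (u'' x ^ 2)
  + ENNReal.ofReal (1 / ε) * ∫⁻ x in I, ENNReal.ofReal (W (u x))

/-- The one-dimensional boundary energy `G_ε(v; J)` on the `H^{3/2}` class. -/
def G1D (V : ℝ → ℝ) (ε lam : ℝ) (v v' : ℝ → ℝ) (J : Set ℝ) : ℝ≥0∞ :=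
  ENNReal.ofReal (ε ^ 3 / 8) * halfSemi v' J
  + ENNReal.ofReal lam * ∫⁻ x in J, ENNReal.ofReal (V (v x))

/-- `u ∈ H²(I)`: `u` is differentiable on `I` with derivative `u'`, and `u'` is
absolutely continuous on `I` with a.e. derivative `u''`. -/
def IsH2On (I : Set ℝ) (u u' u'' : ℝ → ℝ) : Prop :=
  (∀ x ∈ I, HasDerivAt u (u' x) x) ∧
  (∀ s ∈ I, ∀ t ∈ I, IntervalIntegrable u'' volume s t ∧
    u' t - u' s = ∫ x in s..t, u'' x)

/-- `v ∈ H^{3/2}(J)`: `v` is absolutely continuous on `J` with a.e. derivative `v'`,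
and `v'` has finite `H^{1/2}(J)` seminorm. -/
def IsH32On (J : Set ℝ) (v v' : ℝ → ℝ) : Prop :=
  (∀ s ∈ J, ∀ t ∈ J, IntervalIntegrable v' volume s t ∧
    v t - v s = ∫ x in s..t, v' x) ∧
  halfSemi v' J ≠ ⊤

/-- `u ∈ BV(I; {c₀, c₁})`: `u` takes only the two values `c₀, c₁` on `I` and is
locally constant on `I` off a finite set. -/
def BVtwo (I : Set ℝ) (c₀ c₁ : ℝ) (u : ℝ → ℝ) : Prop :=
  (∀ x ∈ I, u x = c₀ ∨ u x = c₁) ∧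
  ∃ S : Finset ℝ, ∀ x ∈ I, x ∉ S → ∃ δ > 0, ∀ y ∈ I, |y - x| < δ → u y = u x

/-- Auxiliary: tail integral `∫_{t}^{∞} dh/(16 h³) = 1/(32 t²)`. -/
lemma aux_tail_int {t : ℝ} (ht : 0 < t) :
    (∫⁻ h in Ioi t, ENNReal.ofReal (1 / (16 * h ^ 3))) = ENNReal.ofReal (1 / (32 * t ^ 2)) := by
  have hderiv : ∀ x ∈ Ici t, HasDerivAt (fun h : ℝ => -(1 / (32 * h ^ 2))) (1 / (16 * x ^ 3)) x := by
    intro x hx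
    have hx0 : (0:ℝ) < x := lt_of_lt_of_le ht hx
    have h1 : HasDerivAt (fun h : ℝ => 32 * h ^ 2) (32 * (2 * x)) x := by
      simpa [mul_comm] using (hasDerivAt_pow 2 x).const_mul (32:ℝ)
    have h2 : HasDerivAt (fun h : ℝ => 1 / (32 * h ^ 2)) (-(32 * (2*x)) / (32 * x ^ 2) ^ 2) x := by
      simpa only [one_div] using h1.fun_inv (by positivity)
    have h3 := h2.fun_neg
    refine h3.congr_deriv ?_
    field_simp
    ring
  have hpos : ∀ x ∈ Ioi t, (0:ℝ) ≤ 1 / (16 * x ^ 3) := by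
    intro x hx; have : (0:ℝ) < x := lt_trans ht hx; positivity
  have htend : Tendsto (fun h : ℝ => -(1 / (32 * h ^ 2))) atTop (𝓝 0) := by
    rw [show (0:ℝ) = -0 by ring]
    apply Tendsto.neg
    apply Tendsto.div_atTop tendsto_const_nhds
    exact (tendsto_pow_atTop two_ne_zero).const_mul_atTop (by norm_num)
  have hint := integrableOn_Ioi_deriv_of_nonneg' hderiv hpos htend
  have heq := integral_Ioi_of_hasDerivAt_of_nonneg' hderiv hpos htend
  rw [← ofReal_integral_eq_lintegral_ofReal hint (ae_restrict_of_forall_mem measurableSet_Ioi hpos)]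
  rw [heq]
  norm_num

/-- Auxiliary: lintegral under an affine substitution. -/
lemma aux_lintegral_comp_affine (f : ℝ → ℝ≥0∞) (hf : Measurable f) {c : ℝ} (hc : c ≠ 0) (d : ℝ) :
    ∫⁻ h : ℝ, f (c * h + d) = ENNReal.ofReal |c⁻¹| * ∫⁻ y, f y := by
  have hm : Measurable fun h : ℝ => c * h + d := (measurable_const_mul c).add_const d
  have hmap : Measure.map (fun h : ℝ => c * h + d) volume
      = ENNReal.ofReal |c⁻¹| • (volume : Measure ℝ) := by
    have h2 : (fun h : ℝ => c * h + d) = (fun y : ℝ => y + d) ∘ (c * ·) := rfl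
    rw [h2, ← Measure.map_map (measurable_add_const d) (measurable_const_mul c),
      Real.map_volume_mul_left hc, Measure.map_smul, map_add_right_eq_self]
  rw [← lintegral_map hf hm, hmap, lintegral_smul_measure, smul_eq_mul]

/-- Auxiliary: shear change of variables on ℝ². -/
lemma aux_lintegral_shear (F : ℝ × ℝ → ℝ≥0∞) (hF : Measurable F) :
    ∫⁻ p : ℝ × ℝ, F p = 2 * ∫⁻ m : ℝ, ∫⁻ h : ℝ, F (m + h, m - h) := by
  rw [Measure.volume_eq_prod, lintegral_prod _ hF.aemeasurable]
  have step1 : ∀ x : ℝ, ∫⁻ y : ℝ, F (x, y) = 2 * ∫⁻ h : ℝ, F (x, x - 2 * h) := by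
    intro x
    have h0 := aux_lintegral_comp_affine (fun y => F (x, y)) (hF.comp measurable_prodMk_left)
      (c := -2) (by norm_num) x
    have h1 : ∀ h : ℝ, (-2) * h + x = x - 2 * h := fun h => by ring
    simp only [h1] at h0
    rw [h0, ← mul_assoc, ← ENNReal.ofReal_ofNat, ← ENNReal.ofReal_mul (by norm_num),
      show (2:ℝ) * |(-2:ℝ)⁻¹| = 1 by
        rw [show ((-2:ℝ))⁻¹ = -(2⁻¹) by norm_num, abs_neg, abs_of_pos] <;> norm_num,
      ENNReal.ofReal_one, one_mul]
  simp only [step1]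
  rw [lintegral_const_mul' _ _ (by norm_num)]
  congr 1
  have hsw : AEMeasurable (fun q : ℝ × ℝ => F (q.1, q.1 - 2 * q.2))
      ((volume : Measure ℝ).prod volume) :=
    (hF.comp (measurable_fst.prodMk
      (measurable_fst.sub ((measurable_const_mul 2).comp measurable_snd)))).aemeasurable
  rw [lintegral_lintegral_swap hsw]
  have step2 : ∀ h : ℝ, ∫⁻ x : ℝ, F (x, x - 2 * h) = ∫⁻ m : ℝ, F (m + h, m - h) := by
    intro h
    have := (measurePreserving_add_right (volume : Measure ℝ) h).lintegral_comp
      (f := fun x => F (x, x - 2 * h))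
      (hF.comp (measurable_id.prodMk (measurable_id.sub_const (2*h))))
    rw [← this]
    exact lintegral_congr fun m => by
      show F (m + h, m + h - 2*h) = _
      rw [show m + h - 2*h = m - h by ring]
  simp only [step2]
  have hsw2 : AEMeasurable (fun q : ℝ × ℝ => F (q.2 + q.1, q.2 - q.1))
      ((volume : Measure ℝ).prod volume) :=
    (hF.comp ((measurable_snd.add measurable_fst).prodMk
      (measurable_snd.sub measurable_fst))).aemeasurable
  rw [lintegral_lintegral_swap hsw2]

/-- Auxiliary: lintegral of an even function. -/
lemma aux_lintegral_even (f : ℝ → ℝ≥0∞) (heven : ∀ h : ℝ, f (-h) = f h) :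
    ∫⁻ h, f h = 2 * ∫⁻ h in Ioi (0:ℝ), f h := by
  have hneg : ∫⁻ h in Iio (0:ℝ), f h = ∫⁻ h in Ioi (0:ℝ), f h := by
    have := (Measure.measurePreserving_neg (volume : Measure ℝ)).setLIntegral_comp_preimage_emb
      (MeasurableEquiv.neg ℝ).measurableEmbedding f (Iio 0)
    simp only [heven] at this
    rw [← this]
    congr 1
    · simp [MeasurableEquiv.neg]
  rw [← lintegral_add_compl f (measurableSet_Iio (a := (0:ℝ))), compl_Iio,
    setLIntegral_congr (Ioi_ae_eq_Ici (a := (0:ℝ))).symm, hneg, two_mul]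

/-- Auxiliary: Tonelli computation for the kernel `h⁻³` against `Ioc 0 h` integrals. -/
lemma aux_swap (ψ : ℝ → ℝ≥0∞) (hψ : Measurable ψ) :
    ∫⁻ h in Ioi (0:ℝ), ENNReal.ofReal (1/(16*h^3)) * ∫⁻ t in Ioc (0:ℝ) h, ψ t
      = ∫⁻ t in Ioi (0:ℝ), ψ t * ENNReal.ofReal (1/(32*t^2)) := by
  set c : ℝ → ℝ≥0∞ := fun h => ENNReal.ofReal (1/(16*h^3)) with hcdef
  have hc : Measurable c :=
    ENNReal.measurable_ofReal.comp (measurable_const.div ((measurable_id.pow_const 3).const_mul 16))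
  set f : ℝ × ℝ → ℝ≥0∞ :=
    fun q => ({q : ℝ × ℝ | q.2 ≤ q.1}).indicator (fun q => c q.1 * ψ q.2) q with hfdef
  have hfm : Measurable f :=
    ((hc.comp measurable_fst).mul (hψ.comp measurable_snd)).indicator
      (measurableSet_le measurable_snd measurable_fst)
  have key : ∀ h ∈ Ioi (0:ℝ),
      c h * ∫⁻ t in Ioc (0:ℝ) h, ψ t = ∫⁻ t in Ioi (0:ℝ), f (h, t) := by
    intro h hh
    have : ∀ t : ℝ, f (h, t) = (Iic h).indicator (fun t => c h * ψ t) t := by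
      intro t
      simp only [hfdef, Set.indicator_apply, Set.mem_setOf_eq, Set.mem_Iic]
    simp only [this]
    rw [lintegral_indicator measurableSet_Iic, Measure.restrict_restrict measurableSet_Iic,
      Set.inter_comm, Set.Ioi_inter_Iic, lintegral_const_mul' _ _ ENNReal.ofReal_ne_top]
  have key2 : ∀ t ∈ Ioi (0:ℝ),
      ∫⁻ h in Ioi (0:ℝ), f (h, t) = ψ t * ENNReal.ofReal (1/(32*t^2)) := by
    intro t ht
    have : ∀ h : ℝ, f (h, t) = (Ici t).indicator (fun h => c h * ψ t) h := by
      intro h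
      simp only [hfdef, Set.indicator_apply, Set.mem_setOf_eq, Set.mem_Ici]
    simp only [this]
    rw [lintegral_indicator measurableSet_Ici, Measure.restrict_restrict measurableSet_Ici,
      show Ici t ∩ Ioi (0:ℝ) = Ici t from Set.inter_eq_left.mpr (fun x hx => mem_Ioi.mpr (lt_of_lt_of_le ht hx)),
      ← setLIntegral_congr (Ioi_ae_eq_Ici (a := t)),
      lintegral_mul_const _ hc, aux_tail_int ht, mul_comm]
  calc ∫⁻ h in Ioi (0:ℝ), c h * ∫⁻ t in Ioc (0:ℝ) h, ψ t
      = ∫⁻ h in Ioi (0:ℝ), ∫⁻ t in Ioi (0:ℝ), f (h, t) := by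
        refine lintegral_congr_ae ?_
        filter_upwards [ae_restrict_mem measurableSet_Ioi] with h hh
        exact key h hh
    _ = ∫⁻ t in Ioi (0:ℝ), ∫⁻ h in Ioi (0:ℝ), f (h, t) := lintegral_lintegral_swap hfm.aemeasurable
    _ = ∫⁻ t in Ioi (0:ℝ), ψ t * ENNReal.ofReal (1/(32*t^2)) := by
        refine lintegral_congr_ae ?_
        filter_upwards [ae_restrict_mem measurableSet_Ioi] with t ht
        exact key2 t ht

/-- Auxiliary: the pointwise (in the midpoint/half-width variables) second-difference bound
via Cauchy–Schwarz. -/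
lemma aux_pointwise_bound
    (J : Set ℝ) (hJint : J.OrdConnected)
    (v g : ℝ → ℝ) (hg : Measurable g)
    (hAC : ∀ s ∈ J, ∀ t ∈ J, IntervalIntegrable g volume s t ∧ v t - v s = ∫ x in s..t, g x)
    {m h : ℝ} (hh : 0 < h) (h1 : m + h ∈ J) (h2 : m - h ∈ J) :
    ENNReal.ofReal ((v (m+h) - 2 * v m + v (m-h))^2 / (2*h)^4)
      ≤ ENNReal.ofReal (1/(16*h^3))
        * ∫⁻ t in Ioc 0 h, ENNReal.ofReal ((g (m+t) - g (m-t))^2) := by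
  have hm : m ∈ J := hJint.out h2 h1 ⟨by linarith, by linarith⟩
  have ia : IntervalIntegrable (fun t => g (m + t)) volume 0 h := by
    simpa using (hAC m hm (m+h) h1).1.comp_add_left m
  have ib : IntervalIntegrable (fun t => g (m - t)) volume 0 h := by
    simpa using ((hAC (m-h) h2 m hm).1.comp_sub_left m).symm
  set Δ : ℝ → ℝ := fun t => g (m + t) - g (m - t) with hΔ
  have iΔ : IntervalIntegrable Δ volume 0 h := ia.sub ib
  have E1 : ∫ t in (0:ℝ)..h, g (m + t) = v (m+h) - v m := by
    rw [intervalIntegral.integral_comp_add_left]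
    simpa using ((hAC m hm (m+h) h1).2).symm
  have E2 : ∫ t in (0:ℝ)..h, g (m - t) = v m - v (m-h) := by
    rw [intervalIntegral.integral_comp_sub_left]
    simpa using ((hAC (m-h) h2 m hm).2).symm
  have num_eq : v (m+h) - 2 * v m + v (m-h) = ∫ t in (0:ℝ)..h, Δ t := by
    rw [hΔ, intervalIntegral.integral_sub ia ib, E1, E2]; ring
  have habs : |∫ t in (0:ℝ)..h, Δ t| ≤ ∫ t in Ioc (0:ℝ) h, |Δ t| := by
    have h3 := intervalIntegral.abs_integral_le_integral_abs (f := Δ) (a := (0:ℝ)) (b := h)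
      (μ := volume) hh.le
    rwa [intervalIntegral.integral_of_le hh.le (f := fun t => |Δ t|)] at h3
  have iΔabs : IntegrableOn (fun t => |Δ t|) (Ioc (0:ℝ) h) volume :=
    ((intervalIntegrable_iff_integrableOn_Ioc_of_le hh.le).mp iΔ).abs
  have step1 : ENNReal.ofReal (∫ t in Ioc (0:ℝ) h, |Δ t|)
      = ∫⁻ t in Ioc (0:ℝ) h, ENNReal.ofReal |Δ t| :=
    ofReal_integral_eq_lintegral_ofReal iΔabs (ae_of_all _ fun t => abs_nonneg _)
  set μ := volume.restrict (Ioc (0:ℝ) h)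
  set A := ∫⁻ t in Ioc (0:ℝ) h, ENNReal.ofReal (Δ t ^ 2) with hA
  have holder : (∫⁻ t, ENNReal.ofReal |Δ t| ∂μ)
      ≤ A ^ (1/2 : ℝ) * (ENNReal.ofReal h) ^ (1/2 : ℝ) := by
    have hmeas : AEMeasurable (fun t => ENNReal.ofReal |Δ t|) μ :=
      (ENNReal.measurable_ofReal.comp ((hg.comp (measurable_const.add measurable_id)).sub
        (hg.comp (measurable_const.sub measurable_id))).abs).aemeasurable
    have := ENNReal.lintegral_mul_le_Lp_mul_Lq μ
      (Real.HolderConjugate.two_two : (2:ℝ).HolderConjugate 2)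
      hmeas (aemeasurable_const (b := (1:ℝ≥0∞)))
    simp only [mul_one, Pi.mul_apply] at this
    calc (∫⁻ t, ENNReal.ofReal |Δ t| ∂μ)
        = ∫⁻ t, ENNReal.ofReal |Δ t| * 1 ∂μ := by simp
      _ ≤ (∫⁻ t, (ENNReal.ofReal |Δ t|) ^ (2:ℝ) ∂μ) ^ (1/2 : ℝ)
          * (∫⁻ _t, (1:ℝ≥0∞) ^ (2:ℝ) ∂μ) ^ (1/2 : ℝ) := by
          simpa using this
      _ = A ^ (1/2 : ℝ) * (ENNReal.ofReal h) ^ (1/2 : ℝ) := by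
          congr 1
          · congr 1
            rw [hA]
            refine lintegral_congr fun t => ?_
            rw [show ((2:ℝ)) = ((2:ℕ):ℝ) by norm_num, ENNReal.rpow_natCast,
              ← ENNReal.ofReal_pow (abs_nonneg _), sq_abs]
          · simp [μ, Real.volume_Ioc, hh.le]
  have o1 : ENNReal.ofReal |v (m+h) - 2 * v m + v (m-h)|
      ≤ A ^ (1/2:ℝ) * (ENNReal.ofReal h) ^ (1/2:ℝ) := by
    rw [num_eq]
    exact le_trans (ENNReal.ofReal_le_ofReal habs) (le_trans (le_of_eq step1) holder)
  have hnum2 : ENNReal.ofReal ((v (m+h) - 2 * v m + v (m-h))^2) ≤ A * ENNReal.ofReal h := by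
    calc ENNReal.ofReal ((v (m+h) - 2 * v m + v (m-h))^2)
        = (ENNReal.ofReal |v (m+h) - 2 * v m + v (m-h)|)^2 := by
          rw [← ENNReal.ofReal_pow (abs_nonneg _), sq_abs]
      _ ≤ (A ^ (1/2:ℝ) * (ENNReal.ofReal h) ^ (1/2:ℝ))^2 := pow_le_pow_left' o1 2
      _ = A * ENNReal.ofReal h := by
          rw [mul_pow, ← ENNReal.rpow_natCast (A ^ (1/2:ℝ)),
            ← ENNReal.rpow_natCast ((ENNReal.ofReal h) ^ (1/2:ℝ)),
            ← ENNReal.rpow_mul, ← ENNReal.rpow_mul]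
          norm_num
  calc ENNReal.ofReal ((v (m+h) - 2 * v m + v (m-h))^2 / (2*h)^4)
      = ENNReal.ofReal ((v (m+h) - 2 * v m + v (m-h))^2) * ENNReal.ofReal (1/(16*h^4)) := by
        rw [← ENNReal.ofReal_mul (sq_nonneg _)]
        congr 1
        rw [div_eq_mul_one_div]
        congr 2
        ring
    _ ≤ A * ENNReal.ofReal h * ENNReal.ofReal (1/(16*h^4)) := mul_le_mul_left hnum2 _
    _ = A * ENNReal.ofReal (h * (1/(16*h^4))) := by
        rw [mul_assoc, ← ENNReal.ofReal_mul hh.le]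
    _ = ENNReal.ofReal (1/(16*h^3)) * A := by
        rw [mul_comm]
        congr 1
        congr 1
        field_simp

/-- Auxiliary: a function with an integrable a.e. derivative on an open order-connected set
is continuous there. -/
lemma aux_contOn (J : Set ℝ) (hJopen : IsOpen J) (hJint : J.OrdConnected) (u u' : ℝ → ℝ)
    (hAC : ∀ s ∈ J, ∀ t ∈ J, IntervalIntegrable u' volume s t ∧
      u t - u s = ∫ x in s..t, u' x) :
    ContinuousOn u J := by
  intro x hx
  obtain ⟨ε, hε, hball⟩ := Metric.isOpen_iff.mp hJopen x hx
  have ha : x - ε/2 ∈ J := by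
    apply hball
    rw [Metric.mem_ball, Real.dist_eq, show x - ε/2 - x = -(ε/2) by ring, abs_neg,
      abs_of_pos (by positivity)]
    linarith
  have hb : x + ε/2 ∈ J := by
    apply hball
    rw [Metric.mem_ball, Real.dist_eq, show x + ε/2 - x = ε/2 by ring,
      abs_of_pos (by positivity)]
    linarith
  set a := x - ε/2 with hadef
  set b := x + ε/2 with hbdef
  have hab : a ≤ b := by rw [hadef, hbdef]; linarith
  have hIcc : Icc a b ⊆ J := hJint.out ha hb
  have hint : IntegrableOn u' (uIcc a b) volume := by
    rw [uIcc_of_le hab]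
    exact (intervalIntegrable_iff_integrableOn_Icc_of_le hab).mp (hAC a ha b hb).1
  have hcont : ContinuousOn (fun t => ∫ s in a..t, u' s) (Icc a b) := by
    have := intervalIntegral.continuousOn_primitive_interval (a := a) (b := b) (μ := volume) hint
    rwa [uIcc_of_le hab] at this
  have heq : EqOn u (fun t => u a + ∫ s in a..t, u' s) (Icc a b) := by
    intro t ht
    have := (hAC a ha t (hIcc ht)).2
    simp only
    linarith
  have hcu : ContinuousOn u (Icc a b) := (continuousOn_const.add hcont).congr heq
  have hx' : x ∈ Ioo a b := by rw [hadef, hbdef]; constructor <;> simp <;> linarith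
  exact (hcu.continuousAt (Icc_mem_nhds hx'.1 hx'.2)).continuousWithinAt

/-- Auxiliary: the indicator of a function continuous on an open set is measurable. -/
lemma aux_meas_indicator (J : Set ℝ) (hJopen : IsOpen J) (u : ℝ → ℝ)
    (hu : ContinuousOn u J) : Measurable (J.indicator u) := by
  refine measurable_of_isOpen fun O hO => ?_
  by_cases h0 : (0:ℝ) ∈ O
  · have : J.indicator u ⁻¹' O = (J ∩ u ⁻¹' O) ∪ Jᶜ := by
      ext y
      by_cases hy : y ∈ J <;> simp [Set.indicator_apply, hy, h0]
    rw [this]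
    exact ((hu.isOpen_inter_preimage hJopen hO).measurableSet).union
      hJopen.measurableSet.compl
  · have : J.indicator u ⁻¹' O = J ∩ u ⁻¹' O := by
      ext y
      by_cases hy : y ∈ J <;> simp [Set.indicator_apply, hy, h0]
    rw [this]
    exact (hu.isOpen_inter_preimage hJopen hO).measurableSet

/-- **Lemma 2.4, comparison of fractional seminorms.**
For an open interval `J` and `u ∈ H^{3/2}(J)` (with a.e. derivative `u'`),
`|u|²_{H^{3/2}(J)} ≤ (1/8)·|u'|²_{H^{1/2}(J)}`. -/
theorem seminorm_comparison
    (J : Set ℝ) (hJopen : IsOpen J) (hJint : J.OrdConnected)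
    (u u' : ℝ → ℝ)
    (hAC : ∀ s ∈ J, ∀ t ∈ J, IntervalIntegrable u' volume s t ∧
      u t - u s = ∫ x in s..t, u' x)
    (huL2 : MemLp u 2 (volume.restrict J))
    (hu'L2 : MemLp u' 2 (volume.restrict J))
    (hsemi : halfSemi u' J ≠ ⊤) :
    (∫⁻ p in J ×ˢ J,
        ENNReal.ofReal ((u p.1 - 2 * u ((p.1 + p.2) / 2) + u p.2) ^ 2 / (p.1 - p.2) ^ 4))
      ≤ (1 / 8) * halfSemi u' J := by
  classical
  have hJm : MeasurableSet J := hJopen.measurableSet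
  have hmid : ∀ x ∈ J, ∀ y ∈ J, (x + y)/2 ∈ J := by
    intro x hx y hy
    rcases le_total x y with hxy | hxy
    · exact hJint.out hx hy ⟨by linarith, by linarith⟩
    · exact hJint.out hy hx ⟨by linarith, by linarith⟩
  have huCont : ContinuousOn u J := aux_contOn J hJopen hJint u u' hAC
  set v : ℝ → ℝ := J.indicator u with hvdef
  have hvmeas : Measurable v := aux_meas_indicator J hJopen u huCont
  have hveq : ∀ x ∈ J, v x = u x := fun x hx => indicator_of_mem hx u
  -- a globally measurable a.e. representative of `u'` on `J`
  have hu'aem : AEMeasurable (J.indicator u') volume :=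
    (aemeasurable_indicator_iff hJm).mpr hu'L2.aestronglyMeasurable.aemeasurable
  set g : ℝ → ℝ := hu'aem.mk _ with hgdef
  have hgmeas : Measurable g := hu'aem.measurable_mk
  have hgae : J.indicator u' =ᵐ[volume] g := hu'aem.ae_eq_mk
  have hACvg : ∀ s ∈ J, ∀ t ∈ J, IntervalIntegrable g volume s t ∧
      v t - v s = ∫ x in s..t, g x := by
    intro s hs t ht
    have hsub : uIcc s t ⊆ J := by
      rcases le_total s t with h | h
      · rw [uIcc_of_le h]; exact hJint.out hs ht
      · rw [uIcc_of_ge h]; exact hJint.out ht hs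
    have haeI : ∀ᵐ x ∂volume, x ∈ uIoc s t → u' x = g x := by
      filter_upwards [hgae] with x hx hx2
      rw [← hx, indicator_of_mem (hsub (uIoc_subset_uIcc hx2)) u']
    constructor
    · rw [intervalIntegrable_iff]
      refine (intervalIntegrable_iff.mp (hAC s hs t ht).1).congr ?_
      exact (ae_restrict_iff' measurableSet_uIoc).mpr haeI
    · rw [hveq t ht, hveq s hs, (hAC s hs t ht).2]
      exact intervalIntegral.integral_congr_ae haeI
  -- indicator forms of the two double integrals
  set F : ℝ × ℝ → ℝ≥0∞ := (J ×ˢ J).indicator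
      (fun p => ENNReal.ofReal ((v p.1 - 2 * v ((p.1 + p.2)/2) + v p.2)^2 / (p.1 - p.2)^4))
      with hFdef
  set G : ℝ × ℝ → ℝ≥0∞ := (J ×ˢ J).indicator
      (fun p => ENNReal.ofReal ((g p.1 - g p.2)^2 / (p.1 - p.2)^2)) with hGdef
  have hFmeas : Measurable F := by
    refine Measurable.indicator ?_ (hJm.prod hJm)
    refine ENNReal.measurable_ofReal.comp (Measurable.div ?_ ?_)
    · exact (((hvmeas.comp measurable_fst).sub
        ((hvmeas.comp ((measurable_fst.add measurable_snd).div_const 2)).const_mul 2)).add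
        (hvmeas.comp measurable_snd)).pow_const 2
    · exact (measurable_fst.sub measurable_snd).pow_const 4
  have hGmeas : Measurable G := by
    refine Measurable.indicator ?_ (hJm.prod hJm)
    refine ENNReal.measurable_ofReal.comp (Measurable.div ?_ ?_)
    · exact ((hgmeas.comp measurable_fst).sub (hgmeas.comp measurable_snd)).pow_const 2
    · exact (measurable_fst.sub measurable_snd).pow_const 2
  have hL : (∫⁻ p in J ×ˢ J,
        ENNReal.ofReal ((u p.1 - 2 * u ((p.1 + p.2) / 2) + u p.2) ^ 2 / (p.1 - p.2) ^ 4))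
      = ∫⁻ p, F p := by
    rw [hFdef, lintegral_indicator (hJm.prod hJm)]
    refine lintegral_congr_ae ?_
    filter_upwards [ae_restrict_mem (hJm.prod hJm)] with p hp
    have hp1 : p.1 ∈ J := hp.1
    have hp2 : p.2 ∈ J := hp.2
    rw [hveq _ hp1, hveq _ hp2, hveq _ (hmid _ hp1 _ hp2)]
  have hS : halfSemi u' J = ∫⁻ p, G p := by
    rw [hGdef, lintegral_indicator (hJm.prod hJm)]
    show ∫⁻ p in J ×ˢ J, ENNReal.ofReal ((u' p.1 - u' p.2) ^ 2 / (p.1 - p.2) ^ 2) = _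
    refine lintegral_congr_ae ?_
    obtain ⟨N, hNsub, hNm, hN0⟩ := exists_measurable_superset_of_null (ae_iff.mp hgae)
    have hbad : (volume : Measure (ℝ×ℝ)) ((Prod.fst ⁻¹' N) ∪ (Prod.snd ⁻¹' N)) = 0 := by
      refine measure_union_null ?_ ?_
      · rw [Measure.volume_eq_prod, ← Set.prod_univ, Measure.prod_prod, hN0, zero_mul]
      · rw [Measure.volume_eq_prod, ← Set.univ_prod, Measure.prod_prod, hN0, mul_zero]
    have h1 : ∀ᵐ p ∂(volume.restrict (J ×ˢ J)), p.1 ∉ N ∧ p.2 ∉ N := by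
      refine ae_restrict_of_ae ?_
      rw [ae_iff]
      refine measure_mono_null ?_ hbad
      intro p hp
      rcases not_and_or.mp hp with h | h
      · exact Or.inl (not_not.mp h)
      · exact Or.inr (not_not.mp h)
    filter_upwards [ae_restrict_mem (hJm.prod hJm), h1] with p hp hN'
    have e1 : u' p.1 = g p.1 := by
      have hi : J.indicator u' p.1 = g p.1 := by
        by_contra hc; exact hN'.1 (hNsub hc)
      rw [← hi, indicator_of_mem hp.1]
    have e2 : u' p.2 = g p.2 := by
      have hi : J.indicator u' p.2 = g p.2 := by
        by_contra hc; exact hN'.2 (hNsub hc)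
      rw [← hi, indicator_of_mem hp.2]
    rw [e1, e2]
  rw [hL, hS]
  -- symmetry of F and G
  have hFsymm : ∀ a b : ℝ, F (b, a) = F (a, b) := by
    intro a b
    have hmemiff : (b, a) ∈ J ×ˢ J ↔ (a, b) ∈ J ×ˢ J := by
      simp [Set.mem_prod, and_comm]
    by_cases hab : (a, b) ∈ J ×ˢ J
    · rw [hFdef]
      rw [indicator_of_mem (hmemiff.mpr hab), indicator_of_mem hab]
      simp only
      rw [show (b + a)/2 = (a + b)/2 by ring]
      congr 1
      rw [show (b - a)^4 = (a - b)^4 by ring, show (v b - 2 * v ((a+b)/2) + v a)^2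
        = (v a - 2 * v ((a+b)/2) + v b)^2 by ring]
    · rw [hFdef, indicator_of_notMem (fun h => hab (hmemiff.mp h)),
        indicator_of_notMem hab]
  have hGsymm : ∀ a b : ℝ, G (b, a) = G (a, b) := by
    intro a b
    have hmemiff : (b, a) ∈ J ×ˢ J ↔ (a, b) ∈ J ×ˢ J := by
      simp [Set.mem_prod, and_comm]
    by_cases hab : (a, b) ∈ J ×ˢ J
    · rw [hGdef, indicator_of_mem (hmemiff.mpr hab), indicator_of_mem hab]
      simp only
      congr 1
      rw [show (b - a)^2 = (a - b)^2 by ring, show (g b - g a)^2 = (g a - g b)^2 by ring]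
    · rw [hGdef, indicator_of_notMem (fun h => hab (hmemiff.mp h)),
        indicator_of_notMem hab]
  -- expansion to (m, h) coordinates, restricted to h > 0
  have hFexp : ∫⁻ p, F p = 4 * ∫⁻ m : ℝ, ∫⁻ h in Ioi (0:ℝ), F (m + h, m - h) := by
    rw [aux_lintegral_shear F hFmeas]
    have heven : ∀ m : ℝ, ∫⁻ h : ℝ, F (m + h, m - h)
        = 2 * ∫⁻ h in Ioi (0:ℝ), F (m + h, m - h) := by
      intro m
      refine aux_lintegral_even _ fun h => ?_
      rw [show m + -h = m - h by ring, show m - -h = m + h by ring, hFsymm]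
    simp only [heven]
    rw [lintegral_const_mul' 2 _ (by norm_num), ← mul_assoc]
    norm_num
  have hGexp : ∫⁻ p, G p = 4 * ∫⁻ m : ℝ, ∫⁻ t in Ioi (0:ℝ), G (m + t, m - t) := by
    rw [aux_lintegral_shear G hGmeas]
    have heven : ∀ m : ℝ, ∫⁻ t : ℝ, G (m + t, m - t)
        = 2 * ∫⁻ t in Ioi (0:ℝ), G (m + t, m - t) := by
      intro m
      refine aux_lintegral_even _ fun t => ?_
      rw [show m + -t = m - t by ring, show m - -t = m + t by ring, hGsymm]
    simp only [heven]
    rw [lintegral_const_mul' 2 _ (by norm_num), ← mul_assoc]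
    norm_num
  -- the inner kernel
  set ψ : ℝ → ℝ → ℝ≥0∞ := fun m => ({t : ℝ | m + t ∈ J ∧ m - t ∈ J}).indicator
      (fun t => ENNReal.ofReal ((g (m+t) - g (m-t))^2)) with hψdef
  have hψmeas : ∀ m : ℝ, Measurable (ψ m) := by
    intro m
    refine Measurable.indicator ?_ ?_
    · exact ENNReal.measurable_ofReal.comp
        (((hgmeas.comp (measurable_const.add measurable_id)).sub
          (hgmeas.comp (measurable_const.sub measurable_id))).pow_const 2)
    · exact ((measurable_const.add measurable_id) hJm).inter
        ((measurable_const.sub measurable_id) hJm)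
  -- Claim A : pointwise bound for F
  have hclaimA : ∀ m : ℝ, ∀ h ∈ Ioi (0:ℝ),
      F (m + h, m - h) ≤ ENNReal.ofReal (1/(16*h^3)) * ∫⁻ t in Ioc (0:ℝ) h, ψ m t := by
    intro m h hh
    rw [mem_Ioi] at hh
    by_cases hmem : (m + h, m - h) ∈ J ×ˢ J
    · have h1 : m + h ∈ J := hmem.1
      have h2 : m - h ∈ J := hmem.2
      have hIcc : Icc (m - h) (m + h) ⊆ J := hJint.out h2 h1
      rw [hFdef, indicator_of_mem hmem]
      simp only
      rw [show (m + h + (m - h))/2 = m by ring, show m + h - (m - h) = 2*h by ring]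
      refine le_trans (aux_pointwise_bound J hJint v g hgmeas hACvg hh h1 h2) ?_
      refine mul_le_mul_right (le_of_eq ?_) _
      refine lintegral_congr_ae ?_
      filter_upwards [ae_restrict_mem measurableSet_Ioc] with t ht
      exact (Set.indicator_of_mem (show t ∈ {t : ℝ | m + t ∈ J ∧ m - t ∈ J} from
        ⟨hIcc ⟨by linarith [ht.1, ht.2], by linarith [ht.1, ht.2]⟩,
         hIcc ⟨by linarith [ht.1, ht.2], by linarith [ht.1, ht.2]⟩⟩)
        (fun t => ENNReal.ofReal ((g (m+t) - g (m-t))^2))).symm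
    · rw [hFdef, indicator_of_notMem hmem]
      exact zero_le
  -- Claim B : pointwise identity for G
  have hclaimB : ∀ m : ℝ, ∀ t ∈ Ioi (0:ℝ),
      G (m + t, m - t) = ψ m t * ENNReal.ofReal (1/(4*t^2)) := by
    intro m t ht
    rw [mem_Ioi] at ht
    by_cases hmem : (m + t, m - t) ∈ J ×ˢ J
    · have hψv : ψ m t = ENNReal.ofReal ((g (m+t) - g (m-t))^2) :=
        Set.indicator_of_mem (show t ∈ {t : ℝ | m + t ∈ J ∧ m - t ∈ J} from ⟨hmem.1, hmem.2⟩)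
          (fun t => ENNReal.ofReal ((g (m+t) - g (m-t))^2))
      rw [hGdef, indicator_of_mem hmem, hψv]
      simp only
      rw [← ENNReal.ofReal_mul (sq_nonneg _)]
      congr 1
      rw [show m + t - (m - t) = 2*t by ring]
      rw [div_eq_mul_one_div]
      congr 1
      ring
    · have hψv : ψ m t = 0 :=
        Set.indicator_of_notMem (show t ∉ {t : ℝ | m + t ∈ J ∧ m - t ∈ J} from
          fun hc => hmem ⟨hc.1, hc.2⟩) (fun t => ENNReal.ofReal ((g (m+t) - g (m-t))^2))
      rw [hGdef, indicator_of_notMem hmem, hψv, zero_mul]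
  -- final computation
  calc ∫⁻ p, F p
      = 4 * ∫⁻ m : ℝ, ∫⁻ h in Ioi (0:ℝ), F (m + h, m - h) := hFexp
    _ ≤ 4 * ∫⁻ m : ℝ, ∫⁻ h in Ioi (0:ℝ),
          ENNReal.ofReal (1/(16*h^3)) * ∫⁻ t in Ioc (0:ℝ) h, ψ m t := by
        refine mul_le_mul_right (lintegral_mono fun m => ?_) _
        refine lintegral_mono_ae ?_
        filter_upwards [ae_restrict_mem measurableSet_Ioi] with h hh
        exact hclaimA m h hh
    _ = 4 * ∫⁻ m : ℝ, ∫⁻ t in Ioi (0:ℝ), ψ m t * ENNReal.ofReal (1/(32*t^2)) := by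
        congr 1
        exact lintegral_congr fun m => aux_swap (ψ m) (hψmeas m)
    _ = ∫⁻ m : ℝ, ∫⁻ t in Ioi (0:ℝ), ψ m t * ENNReal.ofReal (1/(8*t^2)) := by
        rw [← lintegral_const_mul' 4 _ (by norm_num)]
        refine lintegral_congr fun m => ?_
        rw [← lintegral_const_mul' 4 _ (by norm_num)]
        refine lintegral_congr_ae ?_
        filter_upwards [ae_restrict_mem measurableSet_Ioi] with t ht
        rw [mem_Ioi] at ht
        rw [← mul_left_comm, ← ENNReal.ofReal_ofNat, ← ENNReal.ofReal_mul (by norm_num)]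
        congr 2
        all_goals field_simp
        all_goals try ring
    _ = (1/8) * ∫⁻ p, G p := by
        have h8top : (1/8 : ℝ≥0∞) ≠ ⊤ := by
          rw [one_div]; exact ENNReal.inv_ne_top.mpr (by norm_num)
        have h18 : (1/8 : ℝ≥0∞) = ENNReal.ofReal (1/8) := by
          rw [ENNReal.ofReal_div_of_pos (by norm_num), ENNReal.ofReal_one,
            ENNReal.ofReal_ofNat]
        rw [hGexp, ← mul_assoc, mul_comm (1/8 : ℝ≥0∞) 4, mul_assoc,
          ← lintegral_const_mul' (1/8 : ℝ≥0∞) _ h8top,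
          ← lintegral_const_mul' 4 _ ENNReal.ofNat_ne_top]
        refine lintegral_congr fun m => ?_
        rw [← lintegral_const_mul' (1/8 : ℝ≥0∞) _ h8top,
          ← lintegral_const_mul' 4 _ ENNReal.ofNat_ne_top]
        refine lintegral_congr_ae ?_
        filter_upwards [ae_restrict_mem measurableSet_Ioi] with t ht
        rw [hclaimB m t ht]
        rw [mem_Ioi] at ht
        have hre : (4:ℝ≥0∞) * ((1/8) * (ψ m t * ENNReal.ofReal (1/(4*t^2))))
            = ψ m t * ((4:ℝ≥0∞) * ((1/8:ℝ≥0∞) * ENNReal.ofReal (1/(4*t^2)))) := by ring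
        rw [hre, h18, show (4:ℝ≥0∞) = ENNReal.ofReal 4 from (ENNReal.ofReal_ofNat 4).symm,
          ← ENNReal.ofReal_mul (by norm_num), ← ENNReal.ofReal_mul (by norm_num)]
        congr 2
        all_goals field_simp
        all_goals try ring

end
end

section
/- Let J ⊂ ℝ be an open bounded interval. Then there exists a constant C = C(J) > 0 such that ‖u‖_{H¹(J)} ≤ C·( ‖u‖_{L²(J)}^{1/3} · |u'|_{H^{1/2}(J)}^{2/3} + ‖u‖_{L²(J)} ) for all u ∈ H^{3/2}(J). -/
open MeasureTheory Set Filter Topology ENNReal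

noncomputable section

private lemma gn_sqrt_add {x y : ℝ} (hx : 0 ≤ x) (hy : 0 ≤ y) :
    Real.sqrt (x + y) ≤ Real.sqrt x + Real.sqrt y := by
  have h := Real.sqrt_le_sqrt (show x + y ≤ (Real.sqrt x + Real.sqrt y) ^ 2 by
    nlinarith [Real.sq_sqrt hx, Real.sq_sqrt hy, Real.sqrt_nonneg x, Real.sqrt_nonneg y])
  rwa [Real.sqrt_sq (by positivity)] at h

private lemma gn_aemeasF {u' : ℝ → ℝ} {s : Set ℝ}
    (hm : AEMeasurable u' (volume.restrict s)) :
    AEMeasurable (fun p : ℝ × ℝ => ENNReal.ofReal ((u' p.1 - u' p.2) ^ 2 / (p.1 - p.2) ^ 2))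
      ((volume.restrict s).prod (volume.restrict s)) := by
  have h1 : AEMeasurable (fun p : ℝ × ℝ => u' p.1)
      ((volume.restrict s).prod (volume.restrict s)) :=
    hm.comp_quasiMeasurePreserving Measure.quasiMeasurePreserving_fst
  have h2 : AEMeasurable (fun p : ℝ × ℝ => u' p.2)
      ((volume.restrict s).prod (volume.restrict s)) :=
    hm.comp_quasiMeasurePreserving Measure.quasiMeasurePreserving_snd
  exact (((h1.sub h2).pow_const 2).div
    (((measurable_fst.sub measurable_snd).pow_const 2).aemeasurable)).ennreal_ofReal

private lemma gn_tonelli {A B : ℝ} {u' : ℝ → ℝ}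
    (hm : AEMeasurable u' (volume.restrict (Ioo A B))) :
    ∫⁻ x in Ioo A B, ∫⁻ y in Ioo A B, ENNReal.ofReal ((u' x - u' y) ^ 2 / (x - y) ^ 2)
      = halfSemi u' (Ioo A B) := by
  rw [halfSemi, Measure.volume_eq_prod, ← Measure.prod_restrict]
  exact (lintegral_prod _ (gn_aemeasF hm)).symm

private lemma gn_Qbound {A B : ℝ} {u' : ℝ → ℝ}
    (hm : AEMeasurable u' (volume.restrict (Ioo A B)))
    {s : Set ℝ} (hms : MeasurableSet s) (hs : s ⊆ Ioo A B)
    {t : ℝ → Set ℝ} (ht : ∀ x ∈ s, t x ⊆ Ioo A B) :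
    ∫⁻ x in s, ∫⁻ y in t x, ENNReal.ofReal ((u' x - u' y) ^ 2 / (x - y) ^ 2)
      ≤ halfSemi u' (Ioo A B) := by
  rw [← gn_tonelli hm]
  calc ∫⁻ x in s, ∫⁻ y in t x, ENNReal.ofReal ((u' x - u' y) ^ 2 / (x - y) ^ 2)
      ≤ ∫⁻ x in s, ∫⁻ y in Ioo A B, ENNReal.ofReal ((u' x - u' y) ^ 2 / (x - y) ^ 2) := by
        refine lintegral_mono_ae ?_
        filter_upwards [ae_restrict_mem hms] with x hx
        exact lintegral_mono_set (ht x hx)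
    _ ≤ ∫⁻ x in Ioo A B, ∫⁻ y in Ioo A B, ENNReal.ofReal ((u' x - u' y) ^ 2 / (x - y) ^ 2) :=
        lintegral_mono_set hs
private lemma gn_cs {u' : ℝ → ℝ} {x a b : ℝ} (hab : a < b)
    (hi : IntegrableOn (fun y => u' x - u' y) (Ioo a b) volume)
    (hm : AEMeasurable u' (volume.restrict (Ioo a b)))
    (hd : ∀ y ∈ Ioo a b, (x - y) ^ 2 ≤ (b - a) ^ 2) :
    ENNReal.ofReal ((∫ y in Ioo a b, (u' x - u' y)) ^ 2)
      ≤ ENNReal.ofReal ((b - a) ^ 3)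
        * ∫⁻ y in Ioo a b, ENNReal.ofReal ((u' x - u' y) ^ 2 / (x - y) ^ 2) := by
  set g : ℝ → ℝ := fun y => u' x - u' y with hg
  have hd0 : (0:ℝ) ≤ ∫ y in Ioo a b, |g y| := integral_nonneg fun y => abs_nonneg _
  -- step 1 : |∫ g| ≤ ∫ |g|
  have h1 : (∫ y in Ioo a b, g y) ^ 2 ≤ (∫ y in Ioo a b, |g y|) ^ 2 := by
    rw [← sq_abs (∫ y in Ioo a b, g y)]
    have h := norm_integral_le_integral_norm (μ := volume.restrict (Ioo a b)) g
    simp only [Real.norm_eq_abs] at h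
    exact pow_le_pow_left₀ (abs_nonneg _) h 2
  -- step 2 : pass to lintegral
  have h2 : ENNReal.ofReal (∫ y in Ioo a b, |g y|) = ∫⁻ y in Ioo a b, ENNReal.ofReal |g y| :=
    ofReal_integral_eq_lintegral_ofReal hi.abs (Eventually.of_forall fun y => abs_nonneg _)
  have hfm : AEMeasurable (fun y => ENNReal.ofReal |g y|) (volume.restrict (Ioo a b)) := by
    have h := ((aemeasurable_const (b := u' x)).sub hm).norm.ennreal_ofReal
    simpa [Real.norm_eq_abs] using h
  -- step 3 : Hölder (Cauchy-Schwarz)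
  have hconj : Real.HolderConjugate 2 2 := ⟨by norm_num, by norm_num, by norm_num⟩
  have h3 := ENNReal.lintegral_mul_le_Lp_mul_Lq (volume.restrict (Ioo a b)) hconj hfm
    (aemeasurable_const (b := (1:ℝ≥0∞)))
  simp only [Pi.mul_apply, Pi.one_apply, mul_one, ENNReal.one_rpow] at h3
  have hvol : ∫⁻ _ in Ioo a b, (1:ℝ≥0∞) = ENNReal.ofReal (b - a) := by
    simp [Real.volume_Ioo]
  rw [hvol] at h3
  -- h3 : ∫⁻ ofReal |g| ≤ (∫⁻ (ofReal |g|)^(2:ℝ))^(1/2) * (ofReal (b-a))^(1/2)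
  have h4 : (∫⁻ y in Ioo a b, ENNReal.ofReal |g y|) ^ 2
      ≤ (∫⁻ y in Ioo a b, ENNReal.ofReal |g y| ^ (2:ℝ)) * ENNReal.ofReal (b - a) := by
    calc (∫⁻ y in Ioo a b, ENNReal.ofReal |g y|) ^ 2
        ≤ ((∫⁻ y in Ioo a b, ENNReal.ofReal |g y| ^ (2:ℝ)) ^ ((1:ℝ)/2)
            * ENNReal.ofReal (b - a) ^ ((1:ℝ)/2)) ^ 2 := pow_le_pow_left₀ (zero_le) h3 2
      _ = (∫⁻ y in Ioo a b, ENNReal.ofReal |g y| ^ (2:ℝ)) * ENNReal.ofReal (b - a) := by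
          rw [mul_pow, ← ENNReal.rpow_natCast (_ ^ ((1:ℝ)/2)) 2,
            ← ENNReal.rpow_natCast (ENNReal.ofReal (b - a) ^ ((1:ℝ)/2)) 2,
            ← ENNReal.rpow_mul, ← ENNReal.rpow_mul]
          norm_num
  -- identify the quadratic integrand
  have h5 : ∫⁻ y in Ioo a b, ENNReal.ofReal |g y| ^ (2:ℝ)
      = ∫⁻ y in Ioo a b, ENNReal.ofReal (g y ^ 2) := by
    refine lintegral_congr fun y => ?_
    rw [show (2:ℝ) = ((2:ℕ):ℝ) by norm_num, ENNReal.rpow_natCast,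
      ← ENNReal.ofReal_pow (abs_nonneg _), sq_abs]
  -- pointwise domination by the Gagliardo integrand
  have h6 : ∫⁻ y in Ioo a b, ENNReal.ofReal (g y ^ 2)
      ≤ ENNReal.ofReal ((b - a) ^ 2)
        * ∫⁻ y in Ioo a b, ENNReal.ofReal (g y ^ 2 / (x - y) ^ 2) := by
    rw [← lintegral_const_mul' _ _ ENNReal.ofReal_ne_top]
    refine lintegral_mono_ae ?_
    filter_upwards [ae_restrict_mem measurableSet_Ioo] with y hy
    rw [← ENNReal.ofReal_mul (by positivity)]
    refine ENNReal.ofReal_le_ofReal ?_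
    rcases eq_or_ne x y with rfl | hxy
    · simp [hg]
    · have hne : (x - y) ^ 2 ≠ 0 := pow_ne_zero _ (sub_ne_zero_of_ne hxy)
      have e : g y ^ 2 = (x - y) ^ 2 * (g y ^ 2 / (x - y) ^ 2) := by field_simp
      conv_lhs => rw [e]
      exact mul_le_mul_of_nonneg_right (hd y hy) (div_nonneg (sq_nonneg _) (sq_nonneg _))
  -- assemble
  calc ENNReal.ofReal ((∫ y in Ioo a b, g y) ^ 2)
      ≤ ENNReal.ofReal ((∫ y in Ioo a b, |g y|) ^ 2) := ENNReal.ofReal_le_ofReal h1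
    _ = (∫⁻ y in Ioo a b, ENNReal.ofReal |g y|) ^ 2 := by
        rw [ENNReal.ofReal_pow hd0, h2]
    _ ≤ (∫⁻ y in Ioo a b, ENNReal.ofReal |g y| ^ (2:ℝ)) * ENNReal.ofReal (b - a) := h4
    _ ≤ (ENNReal.ofReal ((b - a) ^ 2)
          * ∫⁻ y in Ioo a b, ENNReal.ofReal (g y ^ 2 / (x - y) ^ 2)) * ENNReal.ofReal (b - a) := by
        rw [h5]
        exact mul_le_mul_left h6 _
    _ = ENNReal.ofReal ((b - a) ^ 3)
          * ∫⁻ y in Ioo a b, ENNReal.ofReal (g y ^ 2 / (x - y) ^ 2) := by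
        rw [show ((b-a):ℝ)^3 = (b-a)^2 * (b-a) by ring,
          ENNReal.ofReal_mul (by positivity)]
        ring

private lemma gn_core_fwd {A B h : ℝ} {u u' : ℝ → ℝ}
    (hint : ∀ s ∈ Ioo A B, ∀ t ∈ Ioo A B, IntervalIntegrable u' volume s t ∧
        u t - u s = ∫ x in s..t, u' x)
    (hu : AEMeasurable u (volume.restrict (Ioo A B)))
    (hu' : AEMeasurable u' (volume.restrict (Ioo A B)))
    (h0 : 0 < h) (hh : A + h < B) :
    ∫⁻ x in Ioo A (B - h), ENNReal.ofReal (u' x ^ 2)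
      ≤ ENNReal.ofReal (6 / h ^ 2) * (∫⁻ x in Ioo A B, ENNReal.ofReal (u x ^ 2))
        + ENNReal.ofReal (3 * h) * halfSemi u' (Ioo A B) := by
  set Q : ℝ → ℝ≥0∞ :=
    fun x => ∫⁻ y in Ioo x (x + h), ENNReal.ofReal ((u' x - u' y) ^ 2 / (x - y) ^ 2) with hQdef
  have hsub : Ioo A (B - h) ⊆ Ioo A B := fun z hz => ⟨hz.1, by linarith [hz.2]⟩
  -- pointwise bound
  have key : ∀ x ∈ Ioo A (B - h),
      ENNReal.ofReal (u' x ^ 2)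
        ≤ (ENNReal.ofReal (3 / h ^ 2 * u (x + h) ^ 2) + ENNReal.ofReal (3 / h ^ 2 * u x ^ 2))
          + ENNReal.ofReal (3 * h) * Q x := by
    intro x hx
    have hx1 : x ∈ Ioo A B := hsub hx
    have hx2 : x + h ∈ Ioo A B := ⟨by linarith [hx.1], by linarith [hx.2]⟩
    obtain ⟨hii, hftc⟩ := hint x hx1 (x + h) hx2
    have hgi : IntegrableOn (fun y => u' x - u' y) (Ioo x (x + h)) volume := by
      have h1 : IntegrableOn u' (Ioo x (x + h)) volume := hii.1.mono_set Ioo_subset_Ioc_self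
      have h2 : IntegrableOn (fun _ => u' x) (Ioo x (x + h)) volume := by
        refine integrableOn_const ?_
        simp [Real.volume_Ioo]
      exact h2.sub h1
    have hc : (∫ y in Ioo x (x + h), (u' x - u' y)) = h * u' x - (u (x + h) - u x) := by
      rw [← integral_Ioc_eq_integral_Ioo,
        ← intervalIntegral.integral_of_le (by linarith : x ≤ x + h),
        intervalIntegral.integral_sub intervalIntegrable_const hii,
        intervalIntegral.integral_const, ← hftc, smul_eq_mul]
      ring
    have hreal : u' x ^ 2 ≤ 3 / h ^ 2 * u (x + h) ^ 2 + 3 / h ^ 2 * u x ^ 2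
        + 3 / h ^ 2 * (∫ y in Ioo x (x + h), (u' x - u' y)) ^ 2 := by
      set c := ∫ y in Ioo x (x + h), (u' x - u' y) with hcdef
      have h2 : (0:ℝ) < h ^ 2 := by positivity
      have key2 : (h * u' x) ^ 2
          ≤ 3 * u (x + h) ^ 2 + 3 * u x ^ 2 + 3 * c ^ 2 := by
        have e : h * u' x = c + (u (x + h) - u x) := by rw [hc]; ring
        rw [e]
        nlinarith [sq_nonneg (c - u (x + h)), sq_nonneg (c + u x), sq_nonneg (u (x + h) + u x)]
      calc u' x ^ 2 = (h * u' x) ^ 2 / h ^ 2 := by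
            rw [eq_div_iff (ne_of_gt h2)]; ring
        _ ≤ (3 * u (x + h) ^ 2 + 3 * u x ^ 2 + 3 * c ^ 2) / h ^ 2 := by gcongr
        _ = 3 / h ^ 2 * u (x + h) ^ 2 + 3 / h ^ 2 * u x ^ 2 + 3 / h ^ 2 * c ^ 2 := by ring
    have hcs : ENNReal.ofReal ((∫ y in Ioo x (x + h), (u' x - u' y)) ^ 2)
        ≤ ENNReal.ofReal (h ^ 3) * Q x := by
      have hss : Ioo x (x + h) ⊆ Ioo A B := fun y hy =>
        ⟨lt_trans hx1.1 hy.1, lt_of_lt_of_le hy.2 (by linarith [hx.2])⟩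
      have hmm : AEMeasurable u' (volume.restrict (Ioo x (x + h))) :=
        hu'.mono_measure (Measure.restrict_mono hss le_rfl)
      have hd : ∀ y ∈ Ioo x (x + h), (x - y) ^ 2 ≤ (x + h - x) ^ 2 := by
        intro y hy
        have h1 := hy.1; have h2 := hy.2
        nlinarith
      have := gn_cs (by linarith : x < x + h) hgi hmm hd
      rw [show x + h - x = h by ring] at this
      exact this
    calc ENNReal.ofReal (u' x ^ 2)
        ≤ ENNReal.ofReal (3 / h ^ 2 * u (x + h) ^ 2 + 3 / h ^ 2 * u x ^ 2
            + 3 / h ^ 2 * (∫ y in Ioo x (x + h), (u' x - u' y)) ^ 2) :=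
          ENNReal.ofReal_le_ofReal hreal
      _ ≤ (ENNReal.ofReal (3 / h ^ 2 * u (x + h) ^ 2) + ENNReal.ofReal (3 / h ^ 2 * u x ^ 2))
            + ENNReal.ofReal (3 / h ^ 2 * (∫ y in Ioo x (x + h), (u' x - u' y)) ^ 2) :=
          le_trans ENNReal.ofReal_add_le (add_le_add_left ENNReal.ofReal_add_le _)
      _ ≤ (ENNReal.ofReal (3 / h ^ 2 * u (x + h) ^ 2) + ENNReal.ofReal (3 / h ^ 2 * u x ^ 2))
            + ENNReal.ofReal (3 * h) * Q x := by
          refine add_le_add_right ?_ _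
          rw [ENNReal.ofReal_mul (by positivity)]
          calc ENNReal.ofReal (3 / h ^ 2)
                * ENNReal.ofReal ((∫ y in Ioo x (x + h), (u' x - u' y)) ^ 2)
              ≤ ENNReal.ofReal (3 / h ^ 2) * (ENNReal.ofReal (h ^ 3) * Q x) :=
                mul_le_mul_right hcs _
            _ = ENNReal.ofReal (3 * h) * Q x := by
                rw [← mul_assoc, ← ENNReal.ofReal_mul (by positivity),
                  show 3 / h ^ 2 * h ^ 3 = 3 * h by field_simp]
  -- measurability of the first two summands
  have hmono : volume.restrict (Ioo A (B - h)) ≤ volume.restrict (Ioo A B) :=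
    Measure.restrict_mono hsub le_rfl
  have hmeas_add : Measurable (fun x : ℝ => x + h) := measurable_id.add_const h
  have hqmp : Measure.QuasiMeasurePreserving (fun x : ℝ => x + h)
      (volume.restrict (Ioo A (B - h))) (volume.restrict (Ioo A B)) := by
    refine ⟨hmeas_add, ?_⟩
    have hle : volume.restrict (Ioo A (B - h))
        ≤ volume.restrict ((fun x : ℝ => x + h) ⁻¹' Ioo A B) := by
      refine Measure.restrict_mono (fun z hz => ?_) le_rfl
      exact ⟨by simpa using (by linarith [hz.1] : A < z + h), by simpa using (by linarith [hz.2] : z + h < B)⟩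
    refine Measure.absolutelyContinuous_of_le ?_
    calc Measure.map (fun x : ℝ => x + h) (volume.restrict (Ioo A (B - h)))
        ≤ Measure.map (fun x : ℝ => x + h)
            (volume.restrict ((fun x : ℝ => x + h) ⁻¹' Ioo A B)) :=
          Measure.map_mono hle hmeas_add
      _ = (Measure.map (fun x : ℝ => x + h) volume).restrict (Ioo A B) :=
          (Measure.restrict_map hmeas_add measurableSet_Ioo).symm
      _ = volume.restrict (Ioo A B) := by rw [map_add_right_eq_self]
  have hut : AEMeasurable (fun x => u (x + h)) (volume.restrict (Ioo A (B - h))) :=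
    hu.comp_quasiMeasurePreserving hqmp
  have m1 : AEMeasurable (fun x => ENNReal.ofReal (3 / h ^ 2 * u (x + h) ^ 2))
      (volume.restrict (Ioo A (B - h))) :=
    (((hut.pow_const 2).const_mul _)).ennreal_ofReal
  have m2 : AEMeasurable (fun x => ENNReal.ofReal (3 / h ^ 2 * u x ^ 2))
      (volume.restrict (Ioo A (B - h))) :=
    ((((hu.mono_measure hmono).pow_const 2).const_mul _)).ennreal_ofReal
  -- integrate the pointwise bound
  have step : ∫⁻ x in Ioo A (B - h), ENNReal.ofReal (u' x ^ 2)
      ≤ (∫⁻ x in Ioo A (B - h), ENNReal.ofReal (3 / h ^ 2 * u (x + h) ^ 2))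
        + (∫⁻ x in Ioo A (B - h), ENNReal.ofReal (3 / h ^ 2 * u x ^ 2))
        + ∫⁻ x in Ioo A (B - h), ENNReal.ofReal (3 * h) * Q x := by
    have : ∫⁻ x in Ioo A (B - h), ENNReal.ofReal (u' x ^ 2)
        ≤ ∫⁻ x in Ioo A (B - h),
            ((ENNReal.ofReal (3 / h ^ 2 * u (x + h) ^ 2) + ENNReal.ofReal (3 / h ^ 2 * u x ^ 2))
              + ENNReal.ofReal (3 * h) * Q x) := by
      refine lintegral_mono_ae ?_
      filter_upwards [ae_restrict_mem measurableSet_Ioo] with x hx using key x hx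
    rwa [lintegral_add_left' (f := fun x => ENNReal.ofReal (3 / h ^ 2 * u (x + h) ^ 2) + ENNReal.ofReal (3 / h ^ 2 * u x ^ 2)) (m1.add m2) _, lintegral_add_left' m1 _] at this
  -- handle the three integrals
  have T1 : (∫⁻ x in Ioo A (B - h), ENNReal.ofReal (3 / h ^ 2 * u (x + h) ^ 2))
      ≤ ENNReal.ofReal (3 / h ^ 2) * ∫⁻ x in Ioo A B, ENNReal.ofReal (u x ^ 2) := by
    have e1 : ∀ x : ℝ, ENNReal.ofReal (3 / h ^ 2 * u (x + h) ^ 2)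
        = ENNReal.ofReal (3 / h ^ 2) * ENNReal.ofReal (u (x + h) ^ 2) :=
      fun x => ENNReal.ofReal_mul (by positivity)
    simp only [e1]
    rw [lintegral_const_mul' _ _ ENNReal.ofReal_ne_top]
    refine mul_le_mul_right ?_ _
    have hpre : (fun x : ℝ => x + h) ⁻¹' Ioo (A + h) B = Ioo A (B - h) := by
      ext z
      simp only [mem_preimage, mem_Ioo]
      constructor <;> rintro ⟨h1, h2⟩ <;> constructor <;> linarith
    have := (measurePreserving_add_right volume h).setLIntegral_comp_preimage_emb
      (measurableEmbedding_addRight h) (fun z => ENNReal.ofReal (u z ^ 2)) (Ioo (A + h) B)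
    rw [hpre] at this
    rw [this]
    exact lintegral_mono_set (fun z hz => ⟨by linarith [hz.1], hz.2⟩)
  have T2 : (∫⁻ x in Ioo A (B - h), ENNReal.ofReal (3 / h ^ 2 * u x ^ 2))
      ≤ ENNReal.ofReal (3 / h ^ 2) * ∫⁻ x in Ioo A B, ENNReal.ofReal (u x ^ 2) := by
    have e1 : ∀ x : ℝ, ENNReal.ofReal (3 / h ^ 2 * u x ^ 2)
        = ENNReal.ofReal (3 / h ^ 2) * ENNReal.ofReal (u x ^ 2) :=
      fun x => ENNReal.ofReal_mul (by positivity)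
    simp only [e1]
    rw [lintegral_const_mul' _ _ ENNReal.ofReal_ne_top]
    exact mul_le_mul_right (lintegral_mono_set hsub) _
  have T3 : (∫⁻ x in Ioo A (B - h), ENNReal.ofReal (3 * h) * Q x)
      ≤ ENNReal.ofReal (3 * h) * halfSemi u' (Ioo A B) := by
    rw [lintegral_const_mul' _ _ ENNReal.ofReal_ne_top]
    refine mul_le_mul_right ?_ _
    refine gn_Qbound hu' measurableSet_Ioo hsub ?_
    intro x hx y hy
    exact ⟨lt_trans hx.1 hy.1, lt_of_lt_of_le hy.2 (by linarith [hx.2])⟩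
  calc ∫⁻ x in Ioo A (B - h), ENNReal.ofReal (u' x ^ 2)
      ≤ (∫⁻ x in Ioo A (B - h), ENNReal.ofReal (3 / h ^ 2 * u (x + h) ^ 2))
        + (∫⁻ x in Ioo A (B - h), ENNReal.ofReal (3 / h ^ 2 * u x ^ 2))
        + ∫⁻ x in Ioo A (B - h), ENNReal.ofReal (3 * h) * Q x := step
    _ ≤ (ENNReal.ofReal (3 / h ^ 2) * ∫⁻ x in Ioo A B, ENNReal.ofReal (u x ^ 2))
        + (ENNReal.ofReal (3 / h ^ 2) * ∫⁻ x in Ioo A B, ENNReal.ofReal (u x ^ 2))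
        + ENNReal.ofReal (3 * h) * halfSemi u' (Ioo A B) :=
      add_le_add (add_le_add T1 T2) T3
    _ = ENNReal.ofReal (6 / h ^ 2) * (∫⁻ x in Ioo A B, ENNReal.ofReal (u x ^ 2))
        + ENNReal.ofReal (3 * h) * halfSemi u' (Ioo A B) := by
      rw [← add_mul, ← ENNReal.ofReal_add (by positivity) (by positivity),
        show 3 / h ^ 2 + 3 / h ^ 2 = 6 / h ^ 2 by ring]

private lemma gn_core_bwd {A B h : ℝ} {u u' : ℝ → ℝ}
    (hint : ∀ s ∈ Ioo A B, ∀ t ∈ Ioo A B, IntervalIntegrable u' volume s t ∧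
        u t - u s = ∫ x in s..t, u' x)
    (hu : AEMeasurable u (volume.restrict (Ioo A B)))
    (hu' : AEMeasurable u' (volume.restrict (Ioo A B)))
    (h0 : 0 < h) (hh : A + 2 * h ≤ B) :
    ∫⁻ x in Ioo (B - h) B, ENNReal.ofReal (u' x ^ 2)
      ≤ ENNReal.ofReal (6 / h ^ 2) * (∫⁻ x in Ioo A B, ENNReal.ofReal (u x ^ 2))
        + ENNReal.ofReal (3 * h) * halfSemi u' (Ioo A B) := by
  set Q : ℝ → ℝ≥0∞ :=
    fun x => ∫⁻ y in Ioo (x - h) x, ENNReal.ofReal ((u' x - u' y) ^ 2 / (x - y) ^ 2) with hQdef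
  have hsub : Ioo (B - h) B ⊆ Ioo A B := fun z hz => ⟨by linarith [hz.1], hz.2⟩
  -- pointwise bound
  have key : ∀ x ∈ Ioo (B - h) B,
      ENNReal.ofReal (u' x ^ 2)
        ≤ (ENNReal.ofReal (3 / h ^ 2 * u (x - h) ^ 2) + ENNReal.ofReal (3 / h ^ 2 * u x ^ 2))
          + ENNReal.ofReal (3 * h) * Q x := by
    intro x hx
    have hx1 : x ∈ Ioo A B := hsub hx
    have hx2 : x - h ∈ Ioo A B := ⟨by linarith [hx.1], by linarith [hx.2]⟩
    obtain ⟨hii, hftc⟩ := hint (x - h) hx2 x hx1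
    have hgi : IntegrableOn (fun y => u' x - u' y) (Ioo (x - h) x) volume := by
      have h1 : IntegrableOn u' (Ioo (x - h) x) volume := hii.1.mono_set Ioo_subset_Ioc_self
      have h2 : IntegrableOn (fun _ => u' x) (Ioo (x - h) x) volume := by
        refine integrableOn_const ?_
        simp [Real.volume_Ioo]
      exact h2.sub h1
    have hc : (∫ y in Ioo (x - h) x, (u' x - u' y)) = h * u' x - (u x - u (x - h)) := by
      rw [← integral_Ioc_eq_integral_Ioo,
        ← intervalIntegral.integral_of_le (by linarith : x - h ≤ x),
        intervalIntegral.integral_sub intervalIntegrable_const hii,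
        intervalIntegral.integral_const, ← hftc, smul_eq_mul]
      ring
    have hreal : u' x ^ 2 ≤ 3 / h ^ 2 * u (x - h) ^ 2 + 3 / h ^ 2 * u x ^ 2
        + 3 / h ^ 2 * (∫ y in Ioo (x - h) x, (u' x - u' y)) ^ 2 := by
      set c := ∫ y in Ioo (x - h) x, (u' x - u' y) with hcdef
      have h2 : (0:ℝ) < h ^ 2 := by positivity
      have key2 : (h * u' x) ^ 2
          ≤ 3 * u (x - h) ^ 2 + 3 * u x ^ 2 + 3 * c ^ 2 := by
        have e : h * u' x = c + (u x - u (x - h)) := by rw [hc]; ring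
        rw [e]
        nlinarith [sq_nonneg (c - u x), sq_nonneg (c + u (x - h)), sq_nonneg (u x + u (x - h))]
      calc u' x ^ 2 = (h * u' x) ^ 2 / h ^ 2 := by
            rw [eq_div_iff (ne_of_gt h2)]; ring
        _ ≤ (3 * u (x - h) ^ 2 + 3 * u x ^ 2 + 3 * c ^ 2) / h ^ 2 := by gcongr
        _ = 3 / h ^ 2 * u (x - h) ^ 2 + 3 / h ^ 2 * u x ^ 2 + 3 / h ^ 2 * c ^ 2 := by ring
    have hcs : ENNReal.ofReal ((∫ y in Ioo (x - h) x, (u' x - u' y)) ^ 2)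
        ≤ ENNReal.ofReal (h ^ 3) * Q x := by
      have hss : Ioo (x - h) x ⊆ Ioo A B := fun y hy =>
        ⟨lt_of_le_of_lt (by linarith [hx.1] : A ≤ x - h) hy.1, lt_trans hy.2 hx1.2⟩
      have hmm : AEMeasurable u' (volume.restrict (Ioo (x - h) x)) :=
        hu'.mono_measure (Measure.restrict_mono hss le_rfl)
      have hd : ∀ y ∈ Ioo (x - h) x, (x - y) ^ 2 ≤ (x - (x - h)) ^ 2 := by
        intro y hy
        have h1 := hy.1; have h2 := hy.2
        nlinarith
      have := gn_cs (by linarith : x - h < x) hgi hmm hd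
      rw [show x - (x - h) = h by ring] at this
      exact this
    calc ENNReal.ofReal (u' x ^ 2)
        ≤ ENNReal.ofReal (3 / h ^ 2 * u (x - h) ^ 2 + 3 / h ^ 2 * u x ^ 2
            + 3 / h ^ 2 * (∫ y in Ioo (x - h) x, (u' x - u' y)) ^ 2) :=
          ENNReal.ofReal_le_ofReal hreal
      _ ≤ (ENNReal.ofReal (3 / h ^ 2 * u (x - h) ^ 2) + ENNReal.ofReal (3 / h ^ 2 * u x ^ 2))
            + ENNReal.ofReal (3 / h ^ 2 * (∫ y in Ioo (x - h) x, (u' x - u' y)) ^ 2) :=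
          le_trans ENNReal.ofReal_add_le (add_le_add_left ENNReal.ofReal_add_le _)
      _ ≤ (ENNReal.ofReal (3 / h ^ 2 * u (x - h) ^ 2) + ENNReal.ofReal (3 / h ^ 2 * u x ^ 2))
            + ENNReal.ofReal (3 * h) * Q x := by
          refine add_le_add_right ?_ _
          rw [ENNReal.ofReal_mul (by positivity)]
          calc ENNReal.ofReal (3 / h ^ 2)
                * ENNReal.ofReal ((∫ y in Ioo (x - h) x, (u' x - u' y)) ^ 2)
              ≤ ENNReal.ofReal (3 / h ^ 2) * (ENNReal.ofReal (h ^ 3) * Q x) :=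
                mul_le_mul_right hcs _
            _ = ENNReal.ofReal (3 * h) * Q x := by
                rw [← mul_assoc, ← ENNReal.ofReal_mul (by positivity),
                  show 3 / h ^ 2 * h ^ 3 = 3 * h by field_simp]
  have hmono : volume.restrict (Ioo (B - h) B) ≤ volume.restrict (Ioo A B) :=
    Measure.restrict_mono hsub le_rfl
  have hmeas_add : Measurable (fun x : ℝ => x + (-h)) := measurable_id.add_const (-h)
  have hqmp : Measure.QuasiMeasurePreserving (fun x : ℝ => x + (-h))
      (volume.restrict (Ioo (B - h) B)) (volume.restrict (Ioo A B)) := by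
    refine ⟨hmeas_add, ?_⟩
    have hle : volume.restrict (Ioo (B - h) B)
        ≤ volume.restrict ((fun x : ℝ => x + (-h)) ⁻¹' Ioo A B) := by
      refine Measure.restrict_mono (fun z hz => ?_) le_rfl
      exact ⟨by simpa using (by linarith [hz.1] : A < z + (-h)),
        by simpa using (by linarith [hz.2] : z + (-h) < B)⟩
    refine Measure.absolutelyContinuous_of_le ?_
    calc Measure.map (fun x : ℝ => x + (-h)) (volume.restrict (Ioo (B - h) B))
        ≤ Measure.map (fun x : ℝ => x + (-h))
            (volume.restrict ((fun x : ℝ => x + (-h)) ⁻¹' Ioo A B)) :=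
          Measure.map_mono hle hmeas_add
      _ = (Measure.map (fun x : ℝ => x + (-h)) volume).restrict (Ioo A B) :=
          (Measure.restrict_map hmeas_add measurableSet_Ioo).symm
      _ = volume.restrict (Ioo A B) := by rw [map_add_right_eq_self]
  have hut : AEMeasurable (fun x => u (x + (-h))) (volume.restrict (Ioo (B - h) B)) :=
    hu.comp_quasiMeasurePreserving hqmp
  have hut' : AEMeasurable (fun x => u (x - h)) (volume.restrict (Ioo (B - h) B)) := by
    simpa [sub_eq_add_neg] using hut
  have m1 : AEMeasurable (fun x => ENNReal.ofReal (3 / h ^ 2 * u (x - h) ^ 2))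
      (volume.restrict (Ioo (B - h) B)) :=
    (((hut'.pow_const 2).const_mul _)).ennreal_ofReal
  have m2 : AEMeasurable (fun x => ENNReal.ofReal (3 / h ^ 2 * u x ^ 2))
      (volume.restrict (Ioo (B - h) B)) :=
    ((((hu.mono_measure hmono).pow_const 2).const_mul _)).ennreal_ofReal
  have step : ∫⁻ x in Ioo (B - h) B, ENNReal.ofReal (u' x ^ 2)
      ≤ (∫⁻ x in Ioo (B - h) B, ENNReal.ofReal (3 / h ^ 2 * u (x - h) ^ 2))
        + (∫⁻ x in Ioo (B - h) B, ENNReal.ofReal (3 / h ^ 2 * u x ^ 2))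
        + ∫⁻ x in Ioo (B - h) B, ENNReal.ofReal (3 * h) * Q x := by
    have : ∫⁻ x in Ioo (B - h) B, ENNReal.ofReal (u' x ^ 2)
        ≤ ∫⁻ x in Ioo (B - h) B,
            ((ENNReal.ofReal (3 / h ^ 2 * u (x - h) ^ 2) + ENNReal.ofReal (3 / h ^ 2 * u x ^ 2))
              + ENNReal.ofReal (3 * h) * Q x) := by
      refine lintegral_mono_ae ?_
      filter_upwards [ae_restrict_mem measurableSet_Ioo] with x hx using key x hx
    rwa [lintegral_add_left' (f := fun x => ENNReal.ofReal (3 / h ^ 2 * u (x - h) ^ 2) + ENNReal.ofReal (3 / h ^ 2 * u x ^ 2)) (m1.add m2) _, lintegral_add_left' m1 _] at this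
  have T1 : (∫⁻ x in Ioo (B - h) B, ENNReal.ofReal (3 / h ^ 2 * u (x - h) ^ 2))
      ≤ ENNReal.ofReal (3 / h ^ 2) * ∫⁻ x in Ioo A B, ENNReal.ofReal (u x ^ 2) := by
    have e1 : ∀ x : ℝ, ENNReal.ofReal (3 / h ^ 2 * u (x - h) ^ 2)
        = ENNReal.ofReal (3 / h ^ 2) * ENNReal.ofReal (u (x - h) ^ 2) :=
      fun x => ENNReal.ofReal_mul (by positivity)
    simp only [e1]
    rw [lintegral_const_mul' _ _ ENNReal.ofReal_ne_top]
    refine mul_le_mul_right ?_ _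
    have hpre : (fun x : ℝ => x + (-h)) ⁻¹' Ioo (B - 2 * h) (B - h) = Ioo (B - h) B := by
      ext z
      simp only [mem_preimage, mem_Ioo]
      constructor <;> rintro ⟨h1, h2⟩ <;> constructor <;> linarith
    have heq := (measurePreserving_add_right volume (-h)).setLIntegral_comp_preimage_emb
      (measurableEmbedding_addRight (-h)) (fun z => ENNReal.ofReal (u z ^ 2))
      (Ioo (B - 2 * h) (B - h))
    rw [hpre] at heq
    have heq' : ∫⁻ x in Ioo (B - h) B, ENNReal.ofReal (u (x - h) ^ 2)
        = ∫⁻ z in Ioo (B - 2 * h) (B - h), ENNReal.ofReal (u z ^ 2) := by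
      rw [← heq]
      refine lintegral_congr fun x => ?_
      rw [sub_eq_add_neg]
    rw [heq']
    exact lintegral_mono_set (fun z hz => ⟨by linarith [hz.1], by linarith [hz.2]⟩)
  have T2 : (∫⁻ x in Ioo (B - h) B, ENNReal.ofReal (3 / h ^ 2 * u x ^ 2))
      ≤ ENNReal.ofReal (3 / h ^ 2) * ∫⁻ x in Ioo A B, ENNReal.ofReal (u x ^ 2) := by
    have e1 : ∀ x : ℝ, ENNReal.ofReal (3 / h ^ 2 * u x ^ 2)
        = ENNReal.ofReal (3 / h ^ 2) * ENNReal.ofReal (u x ^ 2) :=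
      fun x => ENNReal.ofReal_mul (by positivity)
    simp only [e1]
    rw [lintegral_const_mul' _ _ ENNReal.ofReal_ne_top]
    exact mul_le_mul_right (lintegral_mono_set hsub) _
  have T3 : (∫⁻ x in Ioo (B - h) B, ENNReal.ofReal (3 * h) * Q x)
      ≤ ENNReal.ofReal (3 * h) * halfSemi u' (Ioo A B) := by
    rw [lintegral_const_mul' _ _ ENNReal.ofReal_ne_top]
    refine mul_le_mul_right ?_ _
    refine gn_Qbound hu' measurableSet_Ioo hsub ?_
    intro x hx y hy
    exact ⟨lt_of_le_of_lt (by linarith [hx.1] : A ≤ x - h) hy.1, lt_trans hy.2 hx.2⟩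
  calc ∫⁻ x in Ioo (B - h) B, ENNReal.ofReal (u' x ^ 2)
      ≤ (∫⁻ x in Ioo (B - h) B, ENNReal.ofReal (3 / h ^ 2 * u (x - h) ^ 2))
        + (∫⁻ x in Ioo (B - h) B, ENNReal.ofReal (3 / h ^ 2 * u x ^ 2))
        + ∫⁻ x in Ioo (B - h) B, ENNReal.ofReal (3 * h) * Q x := step
    _ ≤ (ENNReal.ofReal (3 / h ^ 2) * ∫⁻ x in Ioo A B, ENNReal.ofReal (u x ^ 2))
        + (ENNReal.ofReal (3 / h ^ 2) * ∫⁻ x in Ioo A B, ENNReal.ofReal (u x ^ 2))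
        + ENNReal.ofReal (3 * h) * halfSemi u' (Ioo A B) :=
      add_le_add (add_le_add T1 T2) T3
    _ = ENNReal.ofReal (6 / h ^ 2) * (∫⁻ x in Ioo A B, ENNReal.ofReal (u x ^ 2))
        + ENNReal.ofReal (3 * h) * halfSemi u' (Ioo A B) := by
      rw [← add_mul, ← ENNReal.ofReal_add (by positivity) (by positivity),
        show 3 / h ^ 2 + 3 / h ^ 2 = 6 / h ^ 2 by ring]

private lemma gn_master {A B : ℝ} {u u' : ℝ → ℝ}
    (hint : ∀ s ∈ Ioo A B, ∀ t ∈ Ioo A B, IntervalIntegrable u' volume s t ∧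
        u t - u s = ∫ x in s..t, u' x)
    (hu : AEMeasurable u (volume.restrict (Ioo A B)))
    (hu' : AEMeasurable u' (volume.restrict (Ioo A B)))
    {h : ℝ} (h0 : 0 < h) (h3 : 3 * h ≤ B - A) :
    ∫⁻ x in Ioo A B, ENNReal.ofReal (u' x ^ 2)
      ≤ ENNReal.ofReal (12 / h ^ 2) * (∫⁻ x in Ioo A B, ENNReal.ofReal (u x ^ 2))
        + ENNReal.ofReal (6 * h) * halfSemi u' (Ioo A B) := by
  have hcov : Ioo A B ⊆ Ioo A (B - h) ∪ Ico (B - h) B := by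
    intro x hx
    rcases lt_or_ge x (B - h) with hc | hc
    · exact Or.inl ⟨hx.1, hc⟩
    · exact Or.inr ⟨hc, hx.2⟩
  have hIco : ∫⁻ x in Ico (B - h) B, ENNReal.ofReal (u' x ^ 2)
      = ∫⁻ x in Ioo (B - h) B, ENNReal.ofReal (u' x ^ 2) := by
    rw [← Measure.restrict_congr_set Ioo_ae_eq_Ico]
  calc ∫⁻ x in Ioo A B, ENNReal.ofReal (u' x ^ 2)
      ≤ ∫⁻ x in Ioo A (B - h) ∪ Ico (B - h) B, ENNReal.ofReal (u' x ^ 2) :=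
        lintegral_mono_set hcov
    _ ≤ (∫⁻ x in Ioo A (B - h), ENNReal.ofReal (u' x ^ 2))
        + ∫⁻ x in Ico (B - h) B, ENNReal.ofReal (u' x ^ 2) := lintegral_union_le _ _ _
    _ = (∫⁻ x in Ioo A (B - h), ENNReal.ofReal (u' x ^ 2))
        + ∫⁻ x in Ioo (B - h) B, ENNReal.ofReal (u' x ^ 2) := by rw [hIco]
    _ ≤ (ENNReal.ofReal (6 / h ^ 2) * (∫⁻ x in Ioo A B, ENNReal.ofReal (u x ^ 2))
          + ENNReal.ofReal (3 * h) * halfSemi u' (Ioo A B))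
        + (ENNReal.ofReal (6 / h ^ 2) * (∫⁻ x in Ioo A B, ENNReal.ofReal (u x ^ 2))
          + ENNReal.ofReal (3 * h) * halfSemi u' (Ioo A B)) :=
        add_le_add (gn_core_fwd hint hu hu' h0 (by linarith))
          (gn_core_bwd hint hu hu' h0 (by linarith))
    _ = ENNReal.ofReal (12 / h ^ 2) * (∫⁻ x in Ioo A B, ENNReal.ofReal (u x ^ 2))
        + ENNReal.ofReal (6 * h) * halfSemi u' (Ioo A B) := by
      rw [show (12 / h ^ 2 : ℝ) = 6 / h ^ 2 + 6 / h ^ 2 by ring,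
        show (6 * h : ℝ) = 3 * h + 3 * h by ring,
        ENNReal.ofReal_add (by positivity) (by positivity),
        ENNReal.ofReal_add (by positivity) (by positivity), add_mul, add_mul]
      ring

private lemma gn_masterR {A B : ℝ} {u u' : ℝ → ℝ}
    (hint : ∀ s ∈ Ioo A B, ∀ t ∈ Ioo A B, IntervalIntegrable u' volume s t ∧
        u t - u s = ∫ x in s..t, u' x)
    (h2u : MemLp u 2 (volume.restrict (Ioo A B)))
    (h2u' : MemLp u' 2 (volume.restrict (Ioo A B)))
    (hfin : halfSemi u' (Ioo A B) ≠ ⊤)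
    {h : ℝ} (h0 : 0 < h) (h3 : 3 * h ≤ B - A) :
    (∫ x in Ioo A B, u' x ^ 2)
      ≤ 12 / h ^ 2 * (∫ x in Ioo A B, u x ^ 2)
        + 6 * h * (halfSemi u' (Ioo A B)).toReal := by
  have hu : AEMeasurable u (volume.restrict (Ioo A B)) :=
    h2u.aestronglyMeasurable.aemeasurable
  have hu' : AEMeasurable u' (volume.restrict (Ioo A B)) :=
    h2u'.aestronglyMeasurable.aemeasurable
  have hXe : ENNReal.ofReal (∫ x in Ioo A B, u x ^ 2)
      = ∫⁻ x in Ioo A B, ENNReal.ofReal (u x ^ 2) :=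
    ofReal_integral_eq_lintegral_ofReal h2u.integrable_sq
      (Eventually.of_forall fun x => sq_nonneg _)
  have hYe : ENNReal.ofReal (∫ x in Ioo A B, u' x ^ 2)
      = ∫⁻ x in Ioo A B, ENNReal.ofReal (u' x ^ 2) :=
    ofReal_integral_eq_lintegral_ofReal h2u'.integrable_sq
      (Eventually.of_forall fun x => sq_nonneg _)
  have hb := gn_master hint hu hu' h0 h3
  rw [← hYe, ← hXe] at hb
  have hne : ENNReal.ofReal (12 / h ^ 2) * ENNReal.ofReal (∫ x in Ioo A B, u x ^ 2)
      + ENNReal.ofReal (6 * h) * halfSemi u' (Ioo A B) ≠ ⊤ := by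
    exact ENNReal.add_ne_top.2 ⟨ENNReal.mul_ne_top ENNReal.ofReal_ne_top ENNReal.ofReal_ne_top,
      ENNReal.mul_ne_top ENNReal.ofReal_ne_top hfin⟩
  have hmono := ENNReal.toReal_mono hne hb
  rw [ENNReal.toReal_ofReal (integral_nonneg fun x => sq_nonneg _)] at hmono
  rw [ENNReal.toReal_add (ENNReal.mul_ne_top ENNReal.ofReal_ne_top ENNReal.ofReal_ne_top)
      (ENNReal.mul_ne_top ENNReal.ofReal_ne_top hfin), ENNReal.toReal_mul,
    ENNReal.toReal_mul, ENNReal.toReal_ofReal (by positivity : (0:ℝ) ≤ 12 / h ^ 2),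
    ENNReal.toReal_ofReal (by positivity : (0:ℝ) ≤ 6 * h),
    ENNReal.toReal_ofReal (integral_nonneg fun x => sq_nonneg _)] at hmono
  exact hmono

private lemma gn_opt {L X Y S : ℝ} (hL : 0 < L) (hX : 0 ≤ X) (hY : 0 ≤ Y) (hS : 0 ≤ S)
    (hb : ∀ h : ℝ, 0 < h → 3 * h ≤ L → Y ≤ 12 / h ^ 2 * X + 6 * h * S) :
    Y ≤ 18 * (X ^ ((1:ℝ)/3) * S ^ ((2:ℝ)/3)) + 162 / L ^ 2 * X := by
  have hT0 : 0 ≤ 18 * (X ^ ((1:ℝ)/3) * S ^ ((2:ℝ)/3)) := by positivity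
  have hX2 : 0 ≤ 162 / L ^ 2 * X := by positivity
  rcases eq_or_lt_of_le hX with hX0 | hX0
  · -- X = 0
    have hY0' : Y ≤ 0 := by
      by_contra hcon
      push_neg at hcon
      rcases eq_or_lt_of_le hS with hS0 | hS0
      · have hbb := hb (L / 3) (by positivity) (by linarith)
        rw [← hX0, ← hS0] at hbb
        simp at hbb
        linarith
      · set h := min (L / 3) (Y / (12 * S)) with hhdef
        have h0 : 0 < h := lt_min (by positivity) (by positivity)
        have h3 : 3 * h ≤ L := by
          have := min_le_left (L / 3) (Y / (12 * S))
          linarith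
        have hbb := hb h h0 h3
        rw [← hX0] at hbb
        have h2 : h ≤ Y / (12 * S) := min_le_right _ _
        have e1 : 12 / h ^ 2 * 0 + 6 * h * S = 6 * h * S := by ring
        rw [e1] at hbb
        have hmul : 6 * h * S ≤ 6 * (Y / (12 * S)) * S := by nlinarith
        have e2 : 6 * (Y / (12 * S)) * S = Y / 2 := by
          field_simp
          ring
        linarith
    linarith
  · rcases le_or_gt (S * (L / 3) ^ 3) X with hcase | hcase
    · -- large X : take h = L / 3
      have hbb := hb (L / 3) (by positivity) (by linarith)
      have e1 : 12 / (L / 3) ^ 2 * X = 108 / L ^ 2 * X := by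
        rw [show (L / 3) ^ 2 = L ^ 2 / 9 by ring]
        rw [div_div_eq_mul_div]
        ring
      have hS' : 6 * (L / 3) * S ≤ 54 / L ^ 2 * X := by
        rw [div_mul_eq_mul_div, le_div_iff₀ (by positivity : (0:ℝ) < L ^ 2)]
        nlinarith
      have : Y ≤ 162 / L ^ 2 * X := by
        calc Y ≤ 12 / (L / 3) ^ 2 * X + 6 * (L / 3) * S := hbb
          _ ≤ 108 / L ^ 2 * X + 54 / L ^ 2 * X := by rw [e1] at hbb ⊢; linarith
          _ = 162 / L ^ 2 * X := by ring
      linarith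
    · -- small X : take h = (X / S) ^ (1/3)
      have hS0 : 0 < S := by
        rcases eq_or_lt_of_le hS with h' | h'
        · exfalso
          rw [← h'] at hcase
          simp at hcase
          linarith
        · exact h'
      have hXS : 0 < X / S := by positivity
      set h := (X / S) ^ ((1:ℝ)/3) with hhdef
      have h0 : 0 < h := Real.rpow_pos_of_pos hXS _
      have hlt : h < L / 3 := by
        have hratio : X / S < (L / 3) ^ 3 := by
          rw [div_lt_iff₀ hS0]
          nlinarith
        calc h = (X / S) ^ ((1:ℝ)/3) := rfl
          _ < ((L / 3) ^ 3) ^ ((1:ℝ)/3) := by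
              exact Real.rpow_lt_rpow hXS.le hratio (by norm_num)
          _ = L / 3 := by
              rw [← Real.rpow_natCast (L / 3) 3, ← Real.rpow_mul (by positivity)]
              norm_num
      have h3 : 3 * h ≤ L := by linarith
      have hbb := hb h h0 h3
      have hh3 : h ^ 3 = X / S := by
        rw [hhdef, ← Real.rpow_natCast ((X / S) ^ ((1:ℝ)/3)) 3, ← Real.rpow_mul hXS.le]
        norm_num
      have e1 : 12 / h ^ 2 * X = 12 * (h * S) := by
        have hXe : X = h ^ 3 * S := by
          rw [hh3]
          field_simp
        rw [hXe]
        field_simp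
      have e2 : h * S = X ^ ((1:ℝ)/3) * S ^ ((2:ℝ)/3) := by
        rw [hhdef, Real.div_rpow hX hS]
        rw [div_eq_mul_inv, ← Real.rpow_neg hS]
        rw [mul_assoc]
        congr 1
        nth_rewrite 2 [← Real.rpow_one S]
        rw [← Real.rpow_add hS0]
        norm_num
      calc Y ≤ 12 / h ^ 2 * X + 6 * h * S := hbb
        _ = 18 * (X ^ ((1:ℝ)/3) * S ^ ((2:ℝ)/3)) := by rw [e1, ← e2]; ring
        _ ≤ 18 * (X ^ ((1:ℝ)/3) * S ^ ((2:ℝ)/3)) + 162 / L ^ 2 * X := by linarith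


/-- **Proposition 2.5, Gagliardo–Nirenberg-type inequality.**
For a bounded open interval `J = (A,B)` there is `C = C(J) > 0` such that
`‖u‖_{H¹(J)} ≤ C(‖u‖_{L²(J)}^{1/3}·|u'|_{H^{1/2}(J)}^{2/3} + ‖u‖_{L²(J)})` for every
`u ∈ H^{3/2}(J)`.  (Here `halfSemi u' J` is the squared `H^{1/2}` seminorm, so its
`1/3`-power is the `2/3`-power of the seminorm.) -/
theorem gagliardo_nirenberg_type (A B : ℝ) (hAB : A < B) :
    ∃ C > (0:ℝ), ∀ u u' : ℝ → ℝ,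
      (∀ s ∈ Ioo A B, ∀ t ∈ Ioo A B, IntervalIntegrable u' volume s t ∧
        u t - u s = ∫ x in s..t, u' x) →
      MemLp u 2 (volume.restrict (Ioo A B)) →
      MemLp u' 2 (volume.restrict (Ioo A B)) →
      halfSemi u' (Ioo A B) ≠ ⊤ →
      Real.sqrt ((∫ x in Ioo A B, u x ^ 2) + ∫ x in Ioo A B, u' x ^ 2)
        ≤ C * ((∫ x in Ioo A B, u x ^ 2) ^ ((1:ℝ) / 6)
                * (halfSemi u' (Ioo A B)).toReal ^ ((1:ℝ) / 3)
               + Real.sqrt (∫ x in Ioo A B, u x ^ 2)) := by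
  have hL0 : 0 < B - A := by linarith
  refine ⟨6 + 13 / (B - A), by positivity, ?_⟩
  intro u u' hftc hu2 hu'2 hfin
  set X := ∫ x in Ioo A B, u x ^ 2 with hXdef
  set Y := ∫ x in Ioo A B, u' x ^ 2 with hYdef
  set S := (halfSemi u' (Ioo A B)).toReal with hSdef
  have hX0 : 0 ≤ X := integral_nonneg fun x => sq_nonneg _
  have hY0 : 0 ≤ Y := integral_nonneg fun x => sq_nonneg _
  have hS0 : 0 ≤ S := ENNReal.toReal_nonneg
  have hbound : ∀ h : ℝ, 0 < h → 3 * h ≤ B - A → Y ≤ 12 / h ^ 2 * X + 6 * h * S :=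
    fun h h0 h3 => gn_masterR hftc hu2 hu'2 hfin h0 h3
  have hYb : Y ≤ 18 * (X ^ ((1:ℝ)/3) * S ^ ((2:ℝ)/3)) + 162 / (B - A) ^ 2 * X :=
    gn_opt hL0 hX0 hY0 hS0 hbound
  set E := X ^ ((1:ℝ)/6) * S ^ ((1:ℝ)/3) with hEdef
  have hE0 : 0 ≤ E := mul_nonneg (Real.rpow_nonneg hX0 _) (Real.rpow_nonneg hS0 _)
  have hsqT : Real.sqrt (X ^ ((1:ℝ)/3) * S ^ ((2:ℝ)/3)) = E := by
    rw [show X ^ ((1:ℝ)/3) * S ^ ((2:ℝ)/3) = E ^ 2 by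
      rw [hEdef, mul_pow, ← Real.rpow_natCast (X ^ ((1:ℝ)/6)) 2,
        ← Real.rpow_natCast (S ^ ((1:ℝ)/3)) 2, ← Real.rpow_mul hX0, ← Real.rpow_mul hS0]
      norm_num]
    exact Real.sqrt_sq hE0
  have h18 : Real.sqrt 18 ≤ 5 := by
    rw [show (5:ℝ) = Real.sqrt 25 by
      rw [show (25:ℝ) = 5 ^ 2 by norm_num, Real.sqrt_sq]; norm_num]
    exact Real.sqrt_le_sqrt (by norm_num)
  have h162 : Real.sqrt 162 ≤ 13 := by
    rw [show (13:ℝ) = Real.sqrt 169 by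
      rw [show (169:ℝ) = 13 ^ 2 by norm_num, Real.sqrt_sq]; norm_num]
    exact Real.sqrt_le_sqrt (by norm_num)
  have hT0 : 0 ≤ X ^ ((1:ℝ)/3) * S ^ ((2:ℝ)/3) :=
    mul_nonneg (Real.rpow_nonneg hX0 _) (Real.rpow_nonneg hS0 _)
  calc Real.sqrt (X + Y)
      ≤ Real.sqrt X + Real.sqrt Y := gn_sqrt_add hX0 hY0
    _ ≤ Real.sqrt X
        + Real.sqrt (18 * (X ^ ((1:ℝ)/3) * S ^ ((2:ℝ)/3)) + 162 / (B - A) ^ 2 * X) :=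
        add_le_add_right (Real.sqrt_le_sqrt hYb) _
    _ ≤ Real.sqrt X + (Real.sqrt (18 * (X ^ ((1:ℝ)/3) * S ^ ((2:ℝ)/3)))
        + Real.sqrt (162 / (B - A) ^ 2 * X)) :=
        add_le_add_right (gn_sqrt_add (by positivity) (by positivity)) _
    _ ≤ Real.sqrt X + (5 * E + 13 / (B - A) * Real.sqrt X) := by
        refine add_le_add_right (add_le_add ?_ ?_) _
        · rw [Real.sqrt_mul (by norm_num : (0:ℝ) ≤ 18), hsqT]
          exact mul_le_mul_of_nonneg_right h18 hE0
        · rw [show 162 / (B - A) ^ 2 * X = 162 * X * (1 / (B - A)) ^ 2 by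
            field_simp]
          rw [Real.sqrt_mul (by positivity : (0:ℝ) ≤ 162 * X), Real.sqrt_sq (by positivity),
            Real.sqrt_mul (by norm_num : (0:ℝ) ≤ 162)]
          calc Real.sqrt 162 * Real.sqrt X * (1 / (B - A))
              ≤ 13 * Real.sqrt X * (1 / (B - A)) := by
                refine mul_le_mul_of_nonneg_right ?_ (by positivity)
                exact mul_le_mul_of_nonneg_right h162 (Real.sqrt_nonneg X)
            _ = 13 / (B - A) * Real.sqrt X := by ring
    _ ≤ (6 + 13 / (B - A)) * (E + Real.sqrt X) := by
        have hd : 0 ≤ 13 / (B - A) := by positivity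
        nlinarith [mul_nonneg hd hE0, mul_nonneg hd (Real.sqrt_nonneg X),
          Real.sqrt_nonneg X, hE0]


end
end

section
/- Assume V : ℝ → [0,∞) satisfies (H^V). Then the constant c̄ belongs to (0,∞), i.e. 0 < c̄ < ∞. -/
open MeasureTheory Set Filter Topology ENNReal

noncomputable section

lemma lintegral_CS {α : Type*} [MeasurableSpace α] (μ : Measure α) (F : α → ℝ≥0∞)
    (hF : AEMeasurable F μ) :
    ∫⁻ a, F a ∂μ ≤ (∫⁻ a, F a ^ 2 ∂μ) ^ ((2:ℝ)⁻¹) * (μ univ) ^ ((2:ℝ)⁻¹) := by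
  have hpq : Real.HolderConjugate 2 2 := Real.HolderConjugate.two_two
  have h := ENNReal.lintegral_mul_le_Lp_mul_Lq μ hpq hF (aemeasurable_const (b := (1:ℝ≥0∞)))
  simpa [ENNReal.rpow_two, one_div] using h

lemma key_lb (f' : ℝ → ℝ) (hm : AEMeasurable f' volume)
    (hint : ∀ s t : ℝ, IntervalIntegrable f' volume s t)
    (hH : halfSemi f' univ ≠ ⊤)
    {a q p r D : ℝ} (haq : a < q) (hpr : p < r) (hD : 0 < D)
    (hsep : ∀ x ∈ Ioc a q, ∀ y ∈ Ioc p r, 0 < y - x ∧ y - x ≤ D) :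
    (∫ x in a..q, f' x) * (r - p) - (∫ x in p..r, f' x) * (q - a) ≤
      D * (Real.sqrt ((halfSemi f' univ).toReal) * Real.sqrt ((q - a) * (r - p))) := by
  set I : Set ℝ := Ioc a q with hI
  set J : Set ℝ := Ioc p r with hJ
  have hIf : IntegrableOn f' I := (hint a q).1
  have hJf : IntegrableOn f' J := (hint p r).1
  have hvolI : volume I = ENNReal.ofReal (q - a) := Real.volume_Ioc
  have hvolJ : volume J = ENNReal.ofReal (r - p) := Real.volume_Ioc
  have hIfin : volume I < ⊤ := by rw [hvolI]; exact ENNReal.ofReal_lt_top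
  have hJfin : volume J < ⊤ := by rw [hvolJ]; exact ENNReal.ofReal_lt_top
  set B : ℝ := ∫ x in J, f' x with hB
  set A : ℝ := ∫ x in I, f' x with hA
  set t : ℝ := A * (r - p) - B * (q - a) with ht
  have hiq : (∫ x in a..q, f' x) = A := intervalIntegral.integral_of_le haq.le
  have hipr : (∫ x in p..r, f' x) = B := intervalIntegral.integral_of_le hpr.le
  rw [hiq, hipr]
  -- h x := (r-p) * f' x - B
  set h : ℝ → ℝ := fun x => (r - p) * f' x - B with hh
  have hhint : IntegrableOn h I := by
    exact (hIf.const_mul _).sub (integrableOn_const hIfin.ne)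
  have hstep1 : t = ∫ x in I, h x := by
    rw [hh]
    rw [integral_sub (hIf.const_mul _) (integrableOn_const hIfin.ne)]
    rw [integral_const_mul, integral_const, measureReal_restrict_apply_univ, measureReal_def, hvolI,
      ENNReal.toReal_ofReal (by linarith)]
    simp only [smul_eq_mul, ht]; ring
  have hJconst : IntegrableOn (fun _ : ℝ => B) J := integrableOn_const hJfin.ne
  have hrepr : ∀ x : ℝ, h x = ∫ y in J, (f' x - f' y) := by
    intro x
    rw [integral_sub (integrableOn_const (C := f' x) hJfin.ne) hJf, integral_const,
      measureReal_restrict_apply_univ, measureReal_def, hvolJ, ENNReal.toReal_ofReal (by linarith)]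
    simp only [hh, smul_eq_mul, hB]
  have hstep3 : ∀ x : ℝ, ENNReal.ofReal |h x| ≤ ∫⁻ y in J, ENNReal.ofReal |f' x - f' y| := by
    intro x
    have h1 : |h x| ≤ ∫ y in J, |f' x - f' y| := by
      rw [hrepr x]
      simpa using norm_integral_le_integral_norm (μ := volume.restrict J) (fun y => f' x - f' y)
    calc ENNReal.ofReal |h x| ≤ ENNReal.ofReal (∫ y in J, |f' x - f' y|) :=
          ENNReal.ofReal_le_ofReal h1
      _ = ∫⁻ y in J, ENNReal.ofReal |f' x - f' y| := ofReal_integral_eq_lintegral_ofReal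
            (((integrableOn_const hJfin.ne).sub hJf).abs) (ae_of_all _ fun y => abs_nonneg _)
  have hstep2 : ENNReal.ofReal t ≤ ∫⁻ x in I, ENNReal.ofReal |h x| := by
    have h1 : t ≤ ∫ x in I, |h x| := by
      rw [hstep1]
      exact le_trans (le_abs_self _)
        (by simpa using norm_integral_le_integral_norm (μ := volume.restrict I) h)
    calc ENNReal.ofReal t ≤ ENNReal.ofReal (∫ x in I, |h x|) := ENNReal.ofReal_le_ofReal h1
      _ = ∫⁻ x in I, ENNReal.ofReal |h x| := ofReal_integral_eq_lintegral_ofReal hhint.abs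
            (ae_of_all _ fun y => abs_nonneg _)
  -- measurability
  set ρ : Measure (ℝ × ℝ) := (volume.restrict I).prod (volume.restrict J) with hρ
  have hm1 : AEMeasurable (fun z : ℝ × ℝ => f' z.1) ρ := by
    have h1 : AEMeasurable f' (Measure.map Prod.fst ρ) := by
      rw [hρ, Measure.map_fst_prod]
      exact (hm.restrict).smul_measure _
    exact h1.comp_aemeasurable measurable_fst.aemeasurable
  have hm2 : AEMeasurable (fun z : ℝ × ℝ => f' z.2) ρ := by
    have h1 : AEMeasurable f' (Measure.map Prod.snd ρ) := by
      rw [hρ, Measure.map_snd_prod]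
      exact (hm.restrict).smul_measure _
    exact h1.comp_aemeasurable measurable_snd.aemeasurable
  have hmdiff : AEMeasurable (fun z : ℝ × ℝ => f' z.1 - f' z.2) ρ := hm1.sub hm2
  set F : ℝ × ℝ → ℝ≥0∞ :=
    fun z => ENNReal.ofReal (Real.sqrt ((f' z.1 - f' z.2) ^ 2 / (z.1 - z.2) ^ 2)) with hFdef
  have hmF : AEMeasurable F ρ := by
    apply ENNReal.measurable_ofReal.comp_aemeasurable
    apply Real.continuous_sqrt.measurable.comp_aemeasurable
    exact (hmdiff.pow_const 2).div
      ((measurable_fst.sub measurable_snd).pow_const 2).aemeasurable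
  have hmG : AEMeasurable (fun z : ℝ × ℝ => ENNReal.ofReal |f' z.1 - f' z.2|) ρ :=
    ENNReal.measurable_ofReal.comp_aemeasurable (continuous_abs.measurable.comp_aemeasurable hmdiff)
  have hprodK : ρ = (volume : Measure (ℝ × ℝ)).restrict (I ×ˢ J) := by
    rw [hρ, Measure.prod_restrict, ← Measure.volume_eq_prod]
  have hstep5 : ∫⁻ x in I, ∫⁻ y in J, ENNReal.ofReal |f' x - f' y| =
      ∫⁻ z in I ×ˢ J, ENNReal.ofReal |f' z.1 - f' z.2| := by
    have h1 := MeasureTheory.lintegral_prod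
      (fun z : ℝ × ℝ => ENNReal.ofReal |f' z.1 - f' z.2|) hmG
    rw [← hρ, hprodK] at h1
    exact h1.symm
  have hpt : ∀ z : ℝ × ℝ, z ∈ I ×ˢ J →
      ENNReal.ofReal |f' z.1 - f' z.2| ≤ ENNReal.ofReal D * F z := by
    rintro ⟨x, y⟩ ⟨hx, hy⟩
    obtain ⟨hu0, huD⟩ := hsep x hx y hy
    have h2 : (x - y) ^ 2 = (y - x) ^ 2 := by ring
    have hsq : Real.sqrt ((f' x - f' y) ^ 2 / (x - y) ^ 2) = |f' x - f' y| / (y - x) := by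
      rw [h2, Real.sqrt_div (sq_nonneg _), Real.sqrt_sq_eq_abs, Real.sqrt_sq_eq_abs,
        abs_of_pos hu0]
    have h3 : |f' x - f' y| ≤ D * (|f' x - f' y| / (y - x)) := by
      have h4 := mul_le_mul_of_nonneg_right huD (div_nonneg (abs_nonneg (f' x - f' y)) hu0.le)
      calc |f' x - f' y| = (y - x) * (|f' x - f' y| / (y - x)) := by
            field_simp
        _ ≤ D * (|f' x - f' y| / (y - x)) := h4
    calc ENNReal.ofReal |f' x - f' y|
        ≤ ENNReal.ofReal (D * (|f' x - f' y| / (y - x))) := ENNReal.ofReal_le_ofReal h3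
      _ = ENNReal.ofReal D * ENNReal.ofReal (|f' x - f' y| / (y - x)) :=
          ENNReal.ofReal_mul hD.le
      _ = ENNReal.ofReal D * F (x, y) := by rw [hFdef]; simp only; rw [hsq]
  have hstep6 : ∫⁻ z in I ×ˢ J, ENNReal.ofReal |f' z.1 - f' z.2| ≤
      ENNReal.ofReal D * ∫⁻ z in I ×ˢ J, F z := by
    rw [← lintegral_const_mul' _ _ ENNReal.ofReal_ne_top]
    refine lintegral_mono_ae ?_
    exact (ae_restrict_iff' (measurableSet_Ioc.prod measurableSet_Ioc)).2 (ae_of_all _ hpt)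
  have hKvol : (volume : Measure (ℝ × ℝ)) (I ×ˢ J) = ENNReal.ofReal ((q - a) * (r - p)) := by
    rw [Measure.volume_eq_prod, Measure.prod_prod, hvolI, hvolJ,
      ENNReal.ofReal_mul (by linarith)]
  have hF2 : ∀ z : ℝ × ℝ, F z ^ 2 = ENNReal.ofReal ((f' z.1 - f' z.2) ^ 2 / (z.1 - z.2) ^ 2) := by
    intro z
    rw [hFdef]
    simp only
    rw [← ENNReal.ofReal_pow (Real.sqrt_nonneg _),
      Real.sq_sqrt (div_nonneg (sq_nonneg _) (sq_nonneg _))]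
  have hsq_le : ∫⁻ z in I ×ˢ J, F z ^ 2 ≤ halfSemi f' univ := by
    calc ∫⁻ z in I ×ˢ J, F z ^ 2
        = ∫⁻ z in I ×ˢ J, ENNReal.ofReal ((f' z.1 - f' z.2) ^ 2 / (z.1 - z.2) ^ 2) :=
          lintegral_congr fun z => hF2 z
      _ ≤ ∫⁻ z in univ ×ˢ univ, ENNReal.ofReal ((f' z.1 - f' z.2) ^ 2 / (z.1 - z.2) ^ 2) :=
          lintegral_mono_set (prod_mono (subset_univ I) (subset_univ J))
      _ = halfSemi f' univ := rfl
  have hstep8 : ∫⁻ z in I ×ˢ J, F z ≤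
      (halfSemi f' univ) ^ ((2:ℝ)⁻¹) * (ENNReal.ofReal ((q - a) * (r - p))) ^ ((2:ℝ)⁻¹) := by
    have hcs := lintegral_CS ((volume : Measure (ℝ × ℝ)).restrict (I ×ˢ J)) F
      (by rwa [← hprodK])
    rw [Measure.restrict_apply_univ, hKvol] at hcs
    exact hcs.trans (mul_le_mul_left (ENNReal.rpow_le_rpow hsq_le (by norm_num)) _)
  have hprodnn : (0:ℝ) ≤ (q - a) * (r - p) := mul_nonneg (by linarith) (by linarith)
  have hfinal : ENNReal.ofReal t ≤ ENNReal.ofReal D *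
      ((halfSemi f' univ) ^ ((2:ℝ)⁻¹) * (ENNReal.ofReal ((q - a) * (r - p))) ^ ((2:ℝ)⁻¹)) := by
    refine hstep2.trans ((lintegral_mono fun x => hstep3 x).trans ?_)
    rw [hstep5]
    exact hstep6.trans (mul_le_mul_right hstep8 _)
  have hHr : halfSemi f' univ = ENNReal.ofReal (halfSemi f' univ).toReal :=
    (ENNReal.ofReal_toReal hH).symm
  rw [hHr, ENNReal.ofReal_rpow_of_nonneg ENNReal.toReal_nonneg (by norm_num : (0:ℝ) ≤ 2⁻¹),
    ENNReal.ofReal_rpow_of_nonneg hprodnn (by norm_num : (0:ℝ) ≤ 2⁻¹),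
    ← ENNReal.ofReal_mul (by positivity), ← ENNReal.ofReal_mul hD.le] at hfinal
  have hres := (ENNReal.ofReal_le_ofReal_iff (by positivity)).1 hfinal
  rw [show ((2:ℝ)⁻¹) = (1/2:ℝ) by norm_num, ← Real.sqrt_eq_rpow, ← Real.sqrt_eq_rpow] at hres
  exact hres

lemma cUpSet_nonempty (V : ℝ → ℝ) (α β : ℝ) (hV : HypV V α β) :
    (cUpSet V α β).Nonempty := by
  obtain ⟨hVc, hVnn, hαβ, -⟩ := hV
  set φ : ℝ → ℝ := fun x => max (1 - |x|) 0 with hφ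
  have hφc : Continuous φ := (continuous_const.sub continuous_abs).max continuous_const
  have hφ0 : ∀ x : ℝ, 1 ≤ |x| → φ x = 0 := fun x hx => max_eq_right (by linarith)
  have hφnn : ∀ x, 0 ≤ φ x := fun x => le_max_right _ _
  have hφle : ∀ x, φ x ≤ 1 := fun x => max_le (by linarith [abs_nonneg x]) zero_le_one
  have hφlip : ∀ x y : ℝ, |φ x - φ y| ≤ |x - y| := by
    intro x y
    calc |φ x - φ y| ≤ |(1 - |x|) - (1 - |y|)| := abs_max_sub_max_le_abs _ _ _
      _ = |(|y|) - (|x|)| := by ring_nf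
      _ ≤ |y - x| := abs_abs_sub_abs_le_abs_sub _ _
      _ = |x - y| := abs_sub_comm _ _
  set T : ℝ := ∫ x in (-1:ℝ)..1, φ x with hT
  have hTpos : 0 < T := by
    refine intervalIntegral.intervalIntegral_pos_of_pos_on
      (hφc.intervalIntegrable _ _) (fun x hx => ?_) (by norm_num)
    have hax : |x| < 1 := abs_lt.2 ⟨hx.1, hx.2⟩
    exact lt_max_of_lt_left (by linarith)
  set c : ℝ := (β - α) / T with hc
  have hc0 : 0 < c := div_pos (by linarith) hTpos
  set f' : ℝ → ℝ := fun x => c * φ x with hf'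
  have hf'c : Continuous f' := continuous_const.mul hφc
  have hint : ∀ s t : ℝ, IntervalIntegrable f' volume s t := fun s t =>
    hf'c.intervalIntegrable s t
  set f : ℝ → ℝ := fun x => α + ∫ t in (-1:ℝ)..x, f' t with hf
  have hFTC : ∀ s t : ℝ, f t - f s = ∫ x in s..t, f' x := by
    intro s t
    show (α + ∫ x in (-1:ℝ)..t, f' x) - (α + ∫ x in (-1:ℝ)..s, f' x) = _
    rw [show (α + ∫ x in (-1:ℝ)..t, f' x) - (α + ∫ x in (-1:ℝ)..s, f' x)
        = (∫ x in (-1:ℝ)..t, f' x) - ∫ x in (-1:ℝ)..s, f' x by ring]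
    exact intervalIntegral.integral_interval_sub_left (hint _ _) (hint _ _)
  have hf'zero : ∀ x : ℝ, 1 ≤ |x| → f' x = 0 := by
    intro x hx
    show c * φ x = 0
    rw [hφ0 x hx, mul_zero]
  have hbc : ∀ t : ℝ, 1 ≤ t → f (-t) = α ∧ f t = β := by
    intro t htt
    constructor
    · have hEq : EqOn f' (fun _ => (0:ℝ)) (Set.uIcc (-1:ℝ) (-t)) := by
        intro x hx
        rw [Set.uIcc_of_ge (by linarith : (-t:ℝ) ≤ -1)] at hx
        exact hf'zero x (by have h1 := hx.2; have h2 := neg_le_abs x; linarith)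
      have h1 : (∫ x in (-1:ℝ)..(-t), f' x) = 0 := by
        rw [intervalIntegral.integral_congr hEq]; simp
      show α + (∫ x in (-1:ℝ)..(-t), f' x) = α
      rw [h1, add_zero]
    · have hsplit := intervalIntegral.integral_add_adjacent_intervals (hint (-1) 1) (hint 1 t)
      have h2 : (∫ x in (1:ℝ)..t, f' x) = 0 := by
        have hEq : EqOn f' (fun _ => (0:ℝ)) (Set.uIcc (1:ℝ) t) := by
          intro x hx
          rw [Set.uIcc_of_le htt] at hx
          exact hf'zero x (by have h1 := hx.1; have h2 := le_abs_self x; linarith)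
        rw [intervalIntegral.integral_congr hEq]; simp
      have h3 : (∫ x in (-1:ℝ)..1, f' x) = c * T := by
        rw [hT, ← intervalIntegral.integral_const_mul]
      show α + (∫ x in (-1:ℝ)..t, f' x) = β
      rw [← hsplit, h2, h3, add_zero, hc]
      field_simp; ring
  -- finiteness of the half seminorm
  set g2 : ℝ × ℝ → ℝ≥0∞ := fun p => ENNReal.ofReal (8 * c ^ 2 * (1 + (p.1 - p.2) ^ 2)⁻¹)
    with hg2
  have hg2m : Measurable g2 := by
    apply ENNReal.measurable_ofReal.comp
    exact ((measurable_const.add ((measurable_fst.sub measurable_snd).pow_const 2)).inv).const_mul _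
  have hcore : ∀ x y : ℝ, (f' x - f' y) ^ 2 / (x - y) ^ 2 ≤ 8 * c ^ 2 * (1 + (x - y) ^ 2)⁻¹ := by
    intro x y
    have hlip : |f' x - f' y| ≤ c * |x - y| := by
      show |c * φ x - c * φ y| ≤ _
      rw [← mul_sub, abs_mul, abs_of_pos hc0]
      exact mul_le_mul_of_nonneg_left (hφlip x y) hc0.le
    have hbdd : |f' x - f' y| ≤ 2 * c := by
      show |c * φ x - c * φ y| ≤ _
      calc |c * φ x - c * φ y| ≤ |c * φ x| + |c * φ y| := abs_sub _ _
        _ ≤ c * 1 + c * 1 := by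
            rw [abs_mul, abs_mul, abs_of_pos hc0, abs_of_nonneg (hφnn x), abs_of_nonneg (hφnn y)]
            exact add_le_add (mul_le_mul_of_nonneg_left (hφle x) hc0.le)
              (mul_le_mul_of_nonneg_left (hφle y) hc0.le)
        _ = 2 * c := by ring
    have h1 : (f' x - f' y) ^ 2 ≤ c ^ 2 * (x - y) ^ 2 := by
      have h3 := mul_self_le_mul_self (abs_nonneg (f' x - f' y)) hlip
      have h4 := sq_abs (f' x - f' y)
      have h5 := sq_abs (x - y)
      nlinarith [h3]
    have h2 : (f' x - f' y) ^ 2 ≤ 4 * c ^ 2 := by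
      have h3 := mul_self_le_mul_self (abs_nonneg (f' x - f' y)) hbdd
      have h4 := sq_abs (f' x - f' y)
      nlinarith [h3]
    rcases eq_or_ne (x - y) 0 with h0 | h0
    · have hD : (f' x - f' y) ^ 2 = 0 := by
        rw [h0, abs_zero, mul_zero] at hlip
        have := abs_nonneg (f' x - f' y)
        have h6 : |f' x - f' y| = 0 := le_antisymm hlip this
        rw [← sq_abs, h6]; norm_num
      rw [hD, zero_div]
      positivity
    · have hu2 : 0 < (x - y) ^ 2 := by positivity
      rw [show 8 * c ^ 2 * (1 + (x - y) ^ 2)⁻¹ = 8 * c ^ 2 / (1 + (x - y) ^ 2) by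
        rw [div_eq_mul_inv], div_le_div_iff₀ hu2 (by positivity)]
      have h6 := mul_le_mul_of_nonneg_right h2 (sq_nonneg (x - y))
      nlinarith [h1, h6]
  have hQle : ∀ p : ℝ × ℝ, ENNReal.ofReal ((f' p.1 - f' p.2) ^ 2 / (p.1 - p.2) ^ 2) ≤
      (Icc (-1:ℝ) 1 ×ˢ (univ : Set ℝ)).indicator g2 p +
        ((univ : Set ℝ) ×ˢ Icc (-1:ℝ) 1).indicator g2 p := by
    rintro ⟨x, y⟩
    rcases le_or_gt (|x|) 1 with hx | hx
    · have h1 : (Icc (-1:ℝ) 1 ×ˢ (univ : Set ℝ)).indicator g2 (x, y) = g2 (x, y) :=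
        indicator_of_mem (Set.mk_mem_prod (mem_Icc.2 (abs_le.1 hx)) (mem_univ y)) g2
      rw [h1]
      exact le_trans (ENNReal.ofReal_le_ofReal (hcore x y)) le_self_add
    · rcases le_or_gt (|y|) 1 with hy | hy
      · have h1 : ((univ : Set ℝ) ×ˢ Icc (-1:ℝ) 1).indicator g2 (x, y) = g2 (x, y) :=
          indicator_of_mem (Set.mk_mem_prod (mem_univ x) (mem_Icc.2 (abs_le.1 hy))) g2
        rw [h1]
        exact le_trans (ENNReal.ofReal_le_ofReal (hcore x y)) le_add_self
      · have h1 : f' x = 0 := hf'zero x hx.le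
        have h2 : f' y = 0 := hf'zero y hy.le
        show ENNReal.ofReal ((f' x - f' y) ^ 2 / (x - y) ^ 2) ≤ _
        rw [h1, h2, show ((0:ℝ) - 0) ^ 2 / (x - y) ^ 2 = 0 by norm_num, ENNReal.ofReal_zero]
        exact zero_le
  have hFm : Measurable fun u : ℝ => ENNReal.ofReal (8 * c ^ 2 * (1 + u ^ 2)⁻¹) :=
    ENNReal.measurable_ofReal.comp
      (((measurable_const.add (measurable_id.pow_const 2)).inv).const_mul _)
  have hK : ∫⁻ u : ℝ, ENNReal.ofReal (8 * c ^ 2 * (1 + u ^ 2)⁻¹) < ⊤ :=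
    (integrable_inv_one_add_sq.const_mul (8 * c ^ 2)).lintegral_lt_top
  set Kv := ∫⁻ u : ℝ, ENNReal.ofReal (8 * c ^ 2 * (1 + u ^ 2)⁻¹) with hKv
  have hfin1 : ∫⁻ p : ℝ × ℝ, (Icc (-1:ℝ) 1 ×ˢ (univ : Set ℝ)).indicator g2 p
      = Kv * ENNReal.ofReal 2 := by
    rw [lintegral_indicator (measurableSet_Icc.prod MeasurableSet.univ)]
    have hmeq : (volume : Measure (ℝ × ℝ)).restrict (Icc (-1:ℝ) 1 ×ˢ (univ : Set ℝ))
        = (volume.restrict (Icc (-1:ℝ) 1)).prod volume := by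
      rw [Measure.volume_eq_prod, ← Measure.prod_restrict, Measure.restrict_univ]
    rw [hmeq, MeasureTheory.lintegral_prod g2 hg2m.aemeasurable]
    have hinner : ∀ x : ℝ, ∫⁻ y, g2 (x, y) = Kv := by
      intro x
      rw [hKv]
      exact (Measure.measurePreserving_sub_left volume x).lintegral_comp hFm
    rw [lintegral_congr fun x => hinner x, setLIntegral_const, Real.volume_Icc]
    norm_num
  have hfin2 : ∫⁻ p : ℝ × ℝ, ((univ : Set ℝ) ×ˢ Icc (-1:ℝ) 1).indicator g2 p
      = Kv * ENNReal.ofReal 2 := by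
    rw [lintegral_indicator (MeasurableSet.univ.prod measurableSet_Icc)]
    have hmeq : (volume : Measure (ℝ × ℝ)).restrict ((univ : Set ℝ) ×ˢ Icc (-1:ℝ) 1)
        = (volume : Measure ℝ).prod (volume.restrict (Icc (-1:ℝ) 1)) := by
      rw [Measure.volume_eq_prod, ← Measure.prod_restrict, Measure.restrict_univ]
    rw [hmeq, MeasureTheory.lintegral_prod_symm g2 hg2m.aemeasurable]
    have hinner : ∀ y : ℝ, ∫⁻ x, g2 (x, y) = Kv := by
      intro y
      rw [hKv]
      exact (measurePreserving_sub_right volume y).lintegral_comp hFm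
    rw [lintegral_congr fun y => hinner y, setLIntegral_const, Real.volume_Icc]
    norm_num
  have hHfin : halfSemi f' univ ≠ ⊤ := by
    have hhs : halfSemi f' univ
        = ∫⁻ z : ℝ × ℝ, ENNReal.ofReal ((f' z.1 - f' z.2) ^ 2 / (z.1 - z.2) ^ 2) := by
      rw [halfSemi, univ_prod_univ, Measure.restrict_univ]
    have hle : halfSemi f' univ ≤ Kv * ENNReal.ofReal 2 + Kv * ENNReal.ofReal 2 := by
      rw [hhs]
      calc ∫⁻ z : ℝ × ℝ, ENNReal.ofReal ((f' z.1 - f' z.2) ^ 2 / (z.1 - z.2) ^ 2)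
          ≤ ∫⁻ z : ℝ × ℝ, ((Icc (-1:ℝ) 1 ×ˢ (univ : Set ℝ)).indicator g2 z +
              ((univ : Set ℝ) ×ˢ Icc (-1:ℝ) 1).indicator g2 z) := lintegral_mono hQle
        _ = (∫⁻ z : ℝ × ℝ, (Icc (-1:ℝ) 1 ×ˢ (univ : Set ℝ)).indicator g2 z) +
            ∫⁻ z : ℝ × ℝ, ((univ : Set ℝ) ×ˢ Icc (-1:ℝ) 1).indicator g2 z :=
            lintegral_add_left (hg2m.indicator (measurableSet_Icc.prod MeasurableSet.univ)) _
        _ = Kv * ENNReal.ofReal 2 + Kv * ENNReal.ofReal 2 := by rw [hfin1, hfin2]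
    have hfin : Kv * ENNReal.ofReal 2 + Kv * ENNReal.ofReal 2 < ⊤ := by
      have h1 : Kv * ENNReal.ofReal 2 < ⊤ := ENNReal.mul_lt_top hK ENNReal.ofReal_lt_top
      exact ENNReal.add_lt_top.2 ⟨h1, h1⟩
    exact (lt_of_le_of_lt hle hfin).ne
  exact ⟨_, f, f', 1, one_pos, ⟨hint, hFTC⟩, hHfin, hbc, rfl⟩

lemma cUpSet_lb (V : ℝ → ℝ) (α β : ℝ) (hV : HypV V α β) :
    ∃ c₀ > (0:ℝ), ∀ e ∈ cUpSet V α β, c₀ ≤ e := by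
  obtain ⟨hVc, hVnn, hαβ, hVzero, ⟨C, hC, hcoer⟩, -⟩ := hV
  set d : ℝ := (β - α) / 4 with hdd
  have hd0 : 0 < d := by simp only [hdd]; linarith
  -- a uniform positive lower bound for V away from the wells
  set M : ℝ := Real.sqrt ((1 + 1 / C) / C) + |α| + |β| + 1 with hM
  have hMnn : 0 ≤ Real.sqrt ((1 + 1 / C) / C) := Real.sqrt_nonneg _
  have hVfar : ∀ z : ℝ, M ≤ |z| → 1 ≤ V z := by
    intro z hz
    rw [hM] at hz
    have h1 : Real.sqrt ((1 + 1 / C) / C) ≤ |z| := by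
      have := abs_nonneg α; have := abs_nonneg β; linarith
    have h3 := Real.sq_sqrt (show (0:ℝ) ≤ (1 + 1/C)/C by positivity)
    have h2 : (1 + 1 / C) / C ≤ |z| ^ 2 := by
      nlinarith [mul_self_le_mul_self (Real.sqrt_nonneg ((1 + 1/C)/C)) h1]
    rw [div_le_iff₀ hC] at h2
    linarith [hcoer z]
  set K : Set ℝ := Icc (-M) M ∩ ({z | d ≤ |z - α|} ∩ {z | d ≤ |z - β|}) with hK
  have hKcl : IsClosed ({z : ℝ | d ≤ |z - α|} ∩ {z | d ≤ |z - β|}) := by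
    apply IsClosed.inter
    · exact isClosed_le continuous_const (continuous_abs.comp (continuous_id.sub continuous_const))
    · exact isClosed_le continuous_const (continuous_abs.comp (continuous_id.sub continuous_const))
  have hKcp : IsCompact K := isCompact_Icc.inter_right hKcl
  have hKne : K.Nonempty := by
    have h₁ := neg_abs_le α
    have h₂ := neg_abs_le β
    have h₃ := le_abs_self α
    have h₄ := le_abs_self β
    refine ⟨(α + β) / 2, ⟨?_, ?_, ?_⟩⟩
    · rw [mem_Icc, hM]; constructor <;> linarith
    · show d ≤ |(α + β) / 2 - α|
      have h5 : (α + β) / 2 - α = 2 * d := by rw [hdd]; ring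
      rw [h5, abs_of_pos (by linarith)]; linarith
    · show d ≤ |(α + β) / 2 - β|
      have h5 : (α + β) / 2 - β = -(2 * d) := by rw [hdd]; ring
      rw [h5, abs_neg, abs_of_pos (by linarith)]; linarith
  obtain ⟨z₁, hz₁K, hz₁min⟩ := hKcp.exists_isMinOn hKne hVc.continuousOn
  have hz₁pos : 0 < V z₁ := by
    rcases (hVnn z₁).lt_or_eq with h | h
    · exact h
    · exfalso
      rcases (hVzero z₁).1 h.symm with rfl | rfl
      · have := hz₁K.2.1; simp at this; linarith
      · have := hz₁K.2.2; simp at this; linarith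
  set m : ℝ := min (V z₁) 1 with hm
  have hm0 : 0 < m := lt_min hz₁pos one_pos
  have hmlb : ∀ z : ℝ, d ≤ |z - α| → d ≤ |z - β| → m ≤ V z := by
    intro z h1 h2
    rcases le_or_gt (|z|) M with h3 | h3
    · have hzK : z ∈ K := ⟨abs_le.1 h3, h1, h2⟩
      exact le_trans (min_le_left _ _) (hz₁min hzK)
    · exact le_trans (min_le_right _ _) (hVfar z h3.le)
  refine ⟨min m (7 / 16 * (d ^ 2 / 45)), lt_min hm0 (by positivity), ?_⟩
  rintro e ⟨f, f', R, hR, ⟨hint, hFTC⟩, hH, hbc, he⟩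
  have hβα : β = α + 4 * d := by rw [hdd]; ring
  -- continuity of f
  have hf_cont : Continuous f := by
    have h1 : Continuous fun x : ℝ => ∫ t in (0:ℝ)..x, f' t :=
      intervalIntegral.continuous_primitive (fun a b => hint a b) 0
    have h2 : (fun x : ℝ => f 0 + ∫ t in (0:ℝ)..x, f' t) = f := by
      funext x; have := hFTC 0 x; linarith
    rw [← h2]; exact continuous_const.add h1
  have hfR : ∀ x : ℝ, R ≤ x → f x = β := fun x hx => (hbc x hx).2
  have hfL : ∀ x : ℝ, x ≤ -R → f x = α := by
    intro x hx
    have h1 := (hbc (-x) (by linarith)).1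
    simpa using h1
  have hVf_cont : Continuous fun x => V (f x) := hVc.comp hf_cont
  have hVfint : Integrable fun x => V (f x) := by
    apply hVf_cont.integrable_of_hasCompactSupport
    apply HasCompactSupport.intro (isCompact_Icc (a := -R) (b := R))
    intro x hx
    rw [mem_Icc] at hx; push_neg at hx
    rcases lt_or_ge x (-R) with h | h
    · rw [hfL x h.le]; exact (hVzero α).2 (Or.inl rfl)
    · rw [hfR x (hx h).le]; exact (hVzero β).2 (Or.inr rfl)
  set P : ℝ := ∫ x, V (f x) with hP
  have hP0 : 0 ≤ P := integral_nonneg fun x => hVnn _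
  set Hr : ℝ := (halfSemi f' univ).toReal with hHrdef
  have hHr0 : 0 ≤ Hr := ENNReal.toReal_nonneg
  set Bs : Set ℝ := {x | d ≤ |f x - α| ∧ d ≤ |f x - β|} with hBs
  have hμB : ENNReal.ofReal m * volume Bs ≤ ENNReal.ofReal P := by
    have h1 : ENNReal.ofReal P = ∫⁻ x, ENNReal.ofReal (V (f x)) :=
      ofReal_integral_eq_lintegral_ofReal hVfint (ae_of_all _ fun x => hVnn _)
    rw [h1]
    calc ENNReal.ofReal m * volume Bs = ∫⁻ _ in Bs, ENNReal.ofReal m := by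
          rw [setLIntegral_const]
      _ ≤ ∫⁻ x in Bs, ENNReal.ofReal (V (f x)) :=
          setLIntegral_mono (ENNReal.measurable_ofReal.comp
            (hVf_cont.measurable)) (fun x hx => ENNReal.ofReal_le_ofReal (hmlb _ hx.1 hx.2))
      _ ≤ ∫⁻ x, ENNReal.ofReal (V (f x)) := setLIntegral_le_lintegral _ _
  rcases le_or_gt 1 (volume Bs) with hB1 | hB1
  · -- the potential term is large
    have h2 : ENNReal.ofReal m ≤ ENNReal.ofReal P := by
      calc ENNReal.ofReal m = ENNReal.ofReal m * 1 := (mul_one _).symm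
        _ ≤ ENNReal.ofReal m * volume Bs := mul_le_mul_right hB1 _
        _ ≤ ENNReal.ofReal P := hμB
    have h3 : m ≤ P := (ENNReal.ofReal_le_ofReal_iff hP0).1 h2
    rw [he]
    refine le_trans (min_le_left _ _) ?_
    linarith
  · -- the gradient term is large
    set S : Set ℝ := {x | f x ≤ α + d} with hS
    have hSne : S.Nonempty := ⟨-R, by
      simp only [hS, mem_setOf_eq]; rw [hfL (-R) le_rfl]; linarith⟩
    have hSbdd : BddAbove S := by
      refine ⟨R, fun x hx => ?_⟩
      by_contra h
      push_neg at h
      have h1 : f x ≤ α + d := hx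
      rw [hfR x h.le] at h1
      linarith
    have hScl : IsClosed S := isClosed_le hf_cont continuous_const
    set a := sSup S with ha
    have haS : f a ≤ α + d := hScl.csSup_mem hSne hSbdd
    have hgt : ∀ x, a < x → α + d < f x := by
      intro x hx
      by_contra h
      push_neg at h
      exact absurd (le_csSup hSbdd h) (not_le.2 hx)
    have hpick : ∀ c : ℝ, a ≤ c → ∃ x, x ∈ Ioc c (c + 2) ∧ |f x - β| < d := by
      intro c hc
      by_contra hcon
      push_neg at hcon
      have hsub : Ioc c (c + 2) ⊆ Bs := by
        intro x hx
        have hax : a < x := lt_of_le_of_lt hc hx.1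
        have h1 : α + d < f x := hgt x hax
        exact ⟨le_trans (by linarith : d ≤ f x - α) (le_abs_self _), hcon x hx⟩
      have h2 : volume (Ioc c (c + 2)) ≤ volume Bs := measure_mono hsub
      rw [Real.volume_Ioc] at h2
      have h3 : ENNReal.ofReal (c + 2 - c) = (2:ℝ≥0∞) := by norm_num
      rw [h3] at h2
      have h4 : (2:ℝ≥0∞) < 1 := lt_of_le_of_lt h2 hB1
      norm_num at h4
    obtain ⟨q, hqI, hq⟩ := hpick a le_rfl
    obtain ⟨p, hpI, hp⟩ := hpick (a + 2) (by linarith)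
    obtain ⟨r, hrI, hr⟩ := hpick (a + 10) (by linarith)
    obtain ⟨hq1, hq2⟩ := hqI
    obtain ⟨hp1, hp2⟩ := hpI
    obtain ⟨hr1, hr2⟩ := hrI
    rw [abs_lt] at hq hp hr
    have hmf' : AEMeasurable f' volume := by
      have h1 : AEMeasurable f' (volume.restrict (⋃ n : ℕ, Ioc (-(n:ℝ)) (n:ℝ))) := by
        rw [aemeasurable_iUnion_iff]
        exact fun n => ((hint (-(n:ℝ)) n).1).aemeasurable
      have h3 : (⋃ n : ℕ, Ioc (-(n:ℝ)) (n:ℝ)) = univ := by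
        apply eq_univ_of_forall
        intro x
        obtain ⟨n, hn⟩ := exists_nat_gt |x|
        obtain ⟨hn1, hn2⟩ := abs_lt.1 hn
        exact mem_iUnion.2 ⟨n, hn1, hn2.le⟩
      rwa [h3, Measure.restrict_univ] at h1
    have hsep : ∀ x ∈ Ioc a q, ∀ y ∈ Ioc p r, 0 < y - x ∧ y - x ≤ 12 := by
      rintro x ⟨hx1, hx2⟩ y ⟨hy1, hy2⟩
      constructor <;> linarith
    have hkey := key_lb f' hmf' hint hH hq1 (show p < r by linarith) (by norm_num) hsep
    rw [← hFTC a q, ← hFTC p r] at hkey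
    have e1 : 2 * d ≤ f q - f a := by linarith [hq.1]
    have e6 : f r - f p ≤ 2 * d := by linarith [hr.2, hp.1]
    have ht : 8 * d ≤ (f q - f a) * (r - p) - (f r - f p) * (q - a) := by
      have m1 : (2 * d) * 6 ≤ (f q - f a) * (r - p) :=
        mul_le_mul e1 (by linarith) (by norm_num) (by linarith)
      have m2 : (f r - f p) * (q - a) ≤ (2 * d) * (q - a) :=
        mul_le_mul_of_nonneg_right e6 (by linarith)
      have m3 : (2 * d) * (q - a) ≤ (2 * d) * 2 :=
        mul_le_mul_of_nonneg_left (by linarith) (by linarith)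
      linarith
    have hs20 : Real.sqrt ((q - a) * (r - p)) ≤ Real.sqrt 20 :=
      Real.sqrt_le_sqrt (by nlinarith)
    have hsqHr : Real.sqrt Hr ^ 2 = Hr := Real.sq_sqrt hHr0
    have hsq20 : Real.sqrt 20 ^ 2 = (20:ℝ) := Real.sq_sqrt (by norm_num)
    have h8d : 8 * d ≤ 12 * (Real.sqrt Hr * Real.sqrt 20) := by
      have h5 : 12 * (Real.sqrt Hr * Real.sqrt ((q - a) * (r - p))) ≤
          12 * (Real.sqrt Hr * Real.sqrt 20) :=
        mul_le_mul_of_nonneg_left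
          (mul_le_mul_of_nonneg_left hs20 (Real.sqrt_nonneg Hr)) (by norm_num)
      linarith
    have hHrlb : d ^ 2 / 45 ≤ Hr := by
      have h1 : (8 * d) ^ 2 ≤ (12 * (Real.sqrt Hr * Real.sqrt 20)) ^ 2 :=
        pow_le_pow_left₀ (by positivity) h8d 2
      have h2 : (12 * (Real.sqrt Hr * Real.sqrt 20)) ^ 2 = 2880 * Hr := by
        rw [mul_pow, mul_pow, hsqHr, hsq20]; ring
      rw [h2] at h1
      have h4 : (8 * d) ^ 2 = 64 * d ^ 2 := by ring
      linarith
    rw [he]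
    refine le_trans (min_le_right _ _) ?_
    linarith

/-- **Lemma 3.3.** Under `(H^V)` the constant `c̄` is finite and
strictly positive: the admissible class is nonempty (so `c̄ < ∞`) and `0 < c̄`. -/
theorem cUp_pos_finite (V : ℝ → ℝ) (α β : ℝ) (hV : HypV V α β) :
    (cUpSet V α β).Nonempty ∧ 0 < cUp V α β := by
  have hne := cUpSet_nonempty V α β hV
  obtain ⟨c₀, hc₀, hlb⟩ := cUpSet_lb V α β hV
  refine ⟨hne, ?_⟩
  have h1 : c₀ ≤ cUp V α β := le_csInf hne hlb
  linarith

end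
end

section
/- Assume V : ℝ → [0,∞) satisfies (H^V). Then c̲ = c⋆, where c⋆ := inf{ (3/2^{5/3}) · ( ∫_{−1}^{1}∫_{−1}^{1} |g'(x)−g'(y)|²/|x−y|² dx dy )^{1/3} · ( ∫_{−1}^{1} V(g(x)) dx )^{2/3} : g ∈ H^{3/2}_loc(ℝ), g' ∈ H^{1/2}(ℝ), g(−t) = α and g(t) = β for all t ≥ 1 }. -/
open MeasureTheory Set Filter Topology ENNReal

noncomputable section

/-- Admissible class for the scaled characterization `c⋆` of `c̲`. -/
def cStarSet (V : ℝ → ℝ) (α β : ℝ) : Set ℝ :=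
  {e : ℝ | ∃ g g' : ℝ → ℝ, IsACProfile g g' ∧ halfSemi g' univ ≠ ⊤ ∧
    (∀ t : ℝ, 1 ≤ t → g (-t) = α ∧ g t = β) ∧
    e = (3 / (2:ℝ) ^ ((5:ℝ) / 3))
          * (halfSemi g' (Ioo (-1) 1)).toReal ^ ((1:ℝ) / 3)
          * (∫ x in Ioo (-1:ℝ) 1, V (g x)) ^ ((2:ℝ) / 3)}

private lemma prod_smul_smul (c : ℝ≥0∞) (hc : c ≠ ⊤) (μ ν : Measure ℝ) [SigmaFinite μ]
    [SigmaFinite ν] : Measure.prod (c • μ) (c • ν) = (c * c) • Measure.prod μ ν := by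
  lift c to NNReal using hc
  rw [← ENNReal.smul_def c μ, ← ENNReal.smul_def c ν]
  refine Measure.prod_eq fun s t hs ht => ?_
  simp only [Measure.smul_apply, Measure.prod_prod, ENNReal.smul_def, smul_eq_mul]
  ring

private lemma map_scale_volume_prod {s : ℝ} (hs : 0 < s) :
    Measure.map (fun p : ℝ × ℝ => (s * p.1, s * p.2)) (volume : Measure (ℝ × ℝ))
      = (ENNReal.ofReal |s⁻¹| * ENNReal.ofReal |s⁻¹|) • volume := by
  have h1 : (fun p : ℝ × ℝ => (s * p.1, s * p.2)) = Prod.map (s * ·) (s * ·) := rfl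
  rw [h1, Measure.volume_eq_prod,
    ← Measure.map_prod_map _ _ (measurable_const_mul s) (measurable_const_mul s),
    Real.map_volume_mul_left hs.ne',
    prod_smul_smul _ ENNReal.ofReal_ne_top, ← Measure.volume_eq_prod]

private lemma halfSemi_scale (f' : ℝ → ℝ) {s : ℝ} (hs : 0 < s) {S : Set ℝ}
    (hS : MeasurableSet S) :
    halfSemi (fun x => s * f' (s * x)) ((fun x => s * x) ⁻¹' S)
      = ENNReal.ofReal (s ^ 2) * halfSemi f' S := by
  set F : ℝ × ℝ → ℝ≥0∞ := fun q => ENNReal.ofReal ((f' q.1 - f' q.2) ^ 2 / (q.1 - q.2) ^ 2)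
    with hF
  have hpt : ∀ p : ℝ × ℝ,
      ENNReal.ofReal ((s * f' (s * p.1) - s * f' (s * p.2)) ^ 2 / (p.1 - p.2) ^ 2)
        = ENNReal.ofReal (s ^ 4) * F (s * p.1, s * p.2) := by
    intro p
    rw [hF, ← ENNReal.ofReal_mul (by positivity : (0:ℝ) ≤ s ^ 4)]
    congr 1
    rcases eq_or_ne p.1 p.2 with h | h
    · simp [h]
    · have hxy : p.1 - p.2 ≠ 0 := sub_ne_zero.2 h
      have hsxy : s * p.1 - s * p.2 ≠ 0 := by
        intro hc; apply hxy
        have : s * (p.1 - p.2) = 0 := by ring_nf; ring_nf at hc; linarith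
        rcases mul_eq_zero.1 this with h' | h'
        · exact absurd h' hs.ne'
        · exact h'
      field_simp
  have hE : MeasurableEmbedding (fun p : ℝ × ℝ => (s * p.1, s * p.2)) := by
    have h1 : MeasurableEmbedding (fun x : ℝ => s * x) :=
      (Homeomorph.mulLeft₀ s hs.ne').isClosedEmbedding.measurableEmbedding
    exact h1.prodMap h1
  calc halfSemi (fun x => s * f' (s * x)) ((fun x => s * x) ⁻¹' S)
      = ∫⁻ p in ((fun x => s * x) ⁻¹' S) ×ˢ ((fun x => s * x) ⁻¹' S),
          ENNReal.ofReal (s ^ 4) * F (s * p.1, s * p.2) := by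
        exact lintegral_congr hpt
    _ = ENNReal.ofReal (s ^ 4) *
          ∫⁻ p in ((fun x => s * x) ⁻¹' S) ×ˢ ((fun x => s * x) ⁻¹' S),
            F (s * p.1, s * p.2) := lintegral_const_mul' _ _ ENNReal.ofReal_ne_top
    _ = ENNReal.ofReal (s ^ 4) *
          ∫⁻ q, F q ∂(Measure.map (fun p : ℝ × ℝ => (s * p.1, s * p.2))
            (volume.restrict ((((fun x => s * x) ⁻¹' S)) ×ˢ ((fun x => s * x) ⁻¹' S)))) := by
        rw [hE.lintegral_map]
    _ = ENNReal.ofReal (s ^ 4) *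
          ∫⁻ q, F q ∂((Measure.map (fun p : ℝ × ℝ => (s * p.1, s * p.2)) volume).restrict
            (S ×ˢ S)) := by
        congr 1
        rw [Measure.restrict_map hE.measurable (hS.prod hS)]
        congr 1
    _ = ENNReal.ofReal (s ^ 4) * ((ENNReal.ofReal |s⁻¹| * ENNReal.ofReal |s⁻¹|) *
          ∫⁻ q in S ×ˢ S, F q) := by
        rw [map_scale_volume_prod hs, Measure.restrict_smul, lintegral_smul_measure, smul_eq_mul]
    _ = ENNReal.ofReal (s ^ 2) * halfSemi f' S := by
        have hc : ENNReal.ofReal (s ^ 4) * (ENNReal.ofReal |s⁻¹| * ENNReal.ofReal |s⁻¹|)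
            = ENNReal.ofReal (s ^ 2) := by
          symm
          rw [abs_of_pos (inv_pos.2 hs),
            show (s ^ 2 : ℝ) = s ^ 4 * (s⁻¹ * s⁻¹) by field_simp,
            ENNReal.ofReal_mul (by positivity : (0:ℝ) ≤ s ^ 4),
            ENNReal.ofReal_mul (by positivity : (0:ℝ) ≤ s⁻¹)]
        rw [← mul_assoc, hc, halfSemi]

private lemma isACProfile_scale {g g' : ℝ → ℝ} (h : IsACProfile g g') {s : ℝ} (hs : s ≠ 0) :
    IsACProfile (fun x => g (s * x)) (fun x => s * g' (s * x)) := by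
  obtain ⟨hInt, hFTC⟩ := h
  constructor
  · intro a b
    have h1 := (hInt (s * a) (s * b)).comp_mul_left (c := s)
    rw [mul_div_cancel_left₀ _ hs, mul_div_cancel_left₀ _ hs] at h1
    exact h1.const_mul s
  · intro a b
    have h1 : ∫ x in a..b, s * g' (s * x) = s * ∫ x in a..b, g' (s * x) :=
      intervalIntegral.integral_const_mul s _
    rw [h1, intervalIntegral.integral_comp_mul_left _ hs, smul_eq_mul, ← mul_assoc,
      mul_inv_cancel₀ hs, one_mul, ← hFTC]

private lemma setIntegral_scale (h : ℝ → ℝ) {s : ℝ} (hs : 0 < s) {r : ℝ} (hr : 0 ≤ r) :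
    ∫ x in Ioo (-r) r, h (s * x) = s⁻¹ * ∫ x in Ioo (-(s * r)) (s * r), h x := by
  have h0 : -r ≤ r := by linarith
  have h1 : -(s * r) ≤ s * r := by nlinarith
  rw [← integral_Ioc_eq_integral_Ioo, ← intervalIntegral.integral_of_le h0,
    intervalIntegral.integral_comp_mul_left _ hs.ne', mul_neg,
    intervalIntegral.integral_of_le h1, integral_Ioc_eq_integral_Ioo, smul_eq_mul]

private lemma rpow_scale_cancel (R A B : ℝ) (hR : 0 < R) (hA : 0 ≤ A) (hB : 0 ≤ B) :
    (R ^ 2 * A) ^ ((1:ℝ)/3) * (R⁻¹ * B) ^ ((2:ℝ)/3) = A ^ ((1:ℝ)/3) * B ^ ((2:ℝ)/3) := by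
  rw [Real.mul_rpow (by positivity) hA, Real.mul_rpow (by positivity) hB]
  have h1 : (R ^ 2) ^ ((1:ℝ)/3) = R ^ ((2:ℝ)/3) := by
    rw [← Real.rpow_natCast R 2, ← Real.rpow_mul hR.le]
    norm_num
  have h2 : (R⁻¹) ^ ((2:ℝ)/3) = R ^ (-((2:ℝ)/3)) := by
    rw [← Real.rpow_neg_one, ← Real.rpow_mul hR.le]
    norm_num
  have h3 : R ^ ((2:ℝ)/3) * R ^ (-((2:ℝ)/3)) = 1 := by
    rw [← Real.rpow_add hR]; norm_num
  calc (R ^ 2) ^ ((1:ℝ)/3) * A ^ ((1:ℝ)/3) * ((R⁻¹) ^ ((2:ℝ)/3) * B ^ ((2:ℝ)/3))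
      = (R ^ ((2:ℝ)/3) * R ^ (-((2:ℝ)/3))) * (A ^ ((1:ℝ)/3) * B ^ ((2:ℝ)/3)) := by
        rw [h1, h2]; ring
    _ = A ^ ((1:ℝ)/3) * B ^ ((2:ℝ)/3) := by rw [h3, one_mul]

private lemma amgm_const (A B : ℝ) (hA : 0 ≤ A) (hB : 0 ≤ B) :
    (3 / (2:ℝ) ^ ((5:ℝ)/3)) * A ^ ((1:ℝ)/3) * B ^ ((2:ℝ)/3) ≤ (1/8) * A + B := by
  have hc : (0:ℝ) < (2:ℝ) ^ ((5:ℝ)/3) := Real.rpow_pos_of_pos (by norm_num) _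
  rcases eq_or_lt_of_le hA with hA0 | hApos
  · rw [← hA0, Real.zero_rpow (by norm_num : (1:ℝ)/3 ≠ 0)]
    simp only [mul_zero, zero_mul]
    positivity
  rcases eq_or_lt_of_le hB with hB0 | hBpos
  · rw [← hB0, Real.zero_rpow (by norm_num : (2:ℝ)/3 ≠ 0)]
    simp only [mul_zero]
    positivity
  · have key := Real.geom_mean_le_arith_mean3_weighted
      (by norm_num : (0:ℝ) ≤ 1/3) (by norm_num : (0:ℝ) ≤ 1/3) (by norm_num : (0:ℝ) ≤ 1/3)
      (by positivity : (0:ℝ) ≤ 3 * A / 8) (by positivity : (0:ℝ) ≤ 3 * B / 2)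
      (by positivity : (0:ℝ) ≤ 3 * B / 2) (by norm_num : (1:ℝ)/3 + 1/3 + 1/3 = 1)
    have h8 : (8:ℝ) ^ ((1:ℝ)/3) = 2 := by
      rw [show (8:ℝ) = 2 ^ (3:ℕ) by norm_num, ← Real.rpow_natCast 2 3,
        ← Real.rpow_mul (by norm_num : (0:ℝ) ≤ 2)]
      norm_num
    have e1 : (3 * A / 8) ^ ((1:ℝ)/3) = 3 ^ ((1:ℝ)/3) * A ^ ((1:ℝ)/3) / 2 := by
      rw [Real.div_rpow (by positivity) (by norm_num : (0:ℝ) ≤ 8),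
        Real.mul_rpow (by norm_num : (0:ℝ) ≤ 3) hA, h8]
    have e2 : (3 * B / 2) ^ ((1:ℝ)/3) = 3 ^ ((1:ℝ)/3) * B ^ ((1:ℝ)/3) / 2 ^ ((1:ℝ)/3) := by
      rw [Real.div_rpow (by positivity) (by norm_num : (0:ℝ) ≤ 2),
        Real.mul_rpow (by norm_num : (0:ℝ) ≤ 3) hB]
    have h3' : (3:ℝ) ^ ((1:ℝ)/3) * ((3:ℝ) ^ ((1:ℝ)/3) * (3:ℝ) ^ ((1:ℝ)/3)) = 3 := by
      rw [← Real.rpow_add (by norm_num : (0:ℝ) < 3), ← Real.rpow_add (by norm_num : (0:ℝ) < 3)]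
      norm_num
    have hBB : B ^ ((1:ℝ)/3) * B ^ ((1:ℝ)/3) = B ^ ((2:ℝ)/3) := by
      rw [← Real.rpow_add hBpos]; norm_num
    have h22 : (2:ℝ) ^ ((1:ℝ)/3) * (2:ℝ) ^ ((1:ℝ)/3) = (2:ℝ) ^ ((2:ℝ)/3) := by
      rw [← Real.rpow_add (by norm_num : (0:ℝ) < 2)]; norm_num
    have h25 : (2:ℝ) ^ ((5:ℝ)/3) = 2 * (2:ℝ) ^ ((2:ℝ)/3) := by
      rw [show (5:ℝ)/3 = 1 + 2/3 by norm_num, Real.rpow_add (by norm_num : (0:ℝ) < 2),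
        Real.rpow_one]
    have hc2 : (0:ℝ) < (2:ℝ) ^ ((1:ℝ)/3) := Real.rpow_pos_of_pos (by norm_num) _
    have hc3 : (0:ℝ) < (2:ℝ) ^ ((2:ℝ)/3) := Real.rpow_pos_of_pos (by norm_num) _
    have hlhs : (3 * A / 8) ^ ((1:ℝ)/3) * (3 * B / 2) ^ ((1:ℝ)/3) * (3 * B / 2) ^ ((1:ℝ)/3)
        = (3 / (2:ℝ) ^ ((5:ℝ)/3)) * A ^ ((1:ℝ)/3) * B ^ ((2:ℝ)/3) := by
      rw [e1, e2, h25]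
      rw [show (3:ℝ) ^ ((1:ℝ)/3) * A ^ ((1:ℝ)/3) / 2
            * (3 ^ ((1:ℝ)/3) * B ^ ((1:ℝ)/3) / 2 ^ ((1:ℝ)/3))
            * (3 ^ ((1:ℝ)/3) * B ^ ((1:ℝ)/3) / 2 ^ ((1:ℝ)/3))
          = (3 ^ ((1:ℝ)/3) * (3 ^ ((1:ℝ)/3) * 3 ^ ((1:ℝ)/3))) * A ^ ((1:ℝ)/3)
            * (B ^ ((1:ℝ)/3) * B ^ ((1:ℝ)/3))
            / (2 * ((2:ℝ) ^ ((1:ℝ)/3) * 2 ^ ((1:ℝ)/3))) by ring, h3', hBB, h22]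
      ring
    linarith [key, hlhs]

private lemma exists_scale (A B : ℝ) (hA : 0 ≤ A) (hB : 0 ≤ B) (ε : ℝ) (hε : 0 < ε) :
    ∃ s : ℝ, 0 < s ∧ (1/8) * (s ^ 2 * A) + s⁻¹ * B
      ≤ (3 / (2:ℝ) ^ ((5:ℝ)/3)) * A ^ ((1:ℝ)/3) * B ^ ((2:ℝ)/3) + ε := by
  have hc : (0:ℝ) < (2:ℝ) ^ ((5:ℝ)/3) := Real.rpow_pos_of_pos (by norm_num) _
  rcases eq_or_lt_of_le hB with hB0 | hBpos
  · refine ⟨Real.sqrt (ε / (A + 1)), Real.sqrt_pos.2 (by positivity), ?_⟩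
    have hsq : Real.sqrt (ε / (A + 1)) ^ 2 = ε / (A + 1) := Real.sq_sqrt (le_of_lt (by positivity : (0:ℝ) < ε / (A + 1)))
    rw [← hB0, Real.zero_rpow (by norm_num : (2:ℝ)/3 ≠ 0)]
    rw [hsq]
    have h1 : ε / (A + 1) * A ≤ ε := by
      rw [div_mul_eq_mul_div, div_le_iff₀ (by positivity : (0:ℝ) < A + 1)]
      nlinarith
    have h2 : (0:ℝ) ≤ 3 / (2:ℝ) ^ ((5:ℝ)/3) * A ^ ((1:ℝ)/3) := by positivity
    simp only [mul_zero]
    linarith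
  rcases eq_or_lt_of_le hA with hA0 | hApos
  · refine ⟨B / ε, (by positivity : (0:ℝ) < B / ε), ?_⟩
    rw [← hA0, Real.zero_rpow (by norm_num : (1:ℝ)/3 ≠ 0)]
    have h1 : (B / ε)⁻¹ * B = ε := by field_simp
    simp only [mul_zero, zero_mul, zero_add]
    rw [h1]
  · set s := (4 * B / A) ^ ((1:ℝ)/3) with hsdef
    have hs : 0 < s := Real.rpow_pos_of_pos (by positivity) _
    have hs3 : s ^ (3:ℕ) = 4 * B / A := by
      rw [hsdef, ← Real.rpow_natCast ((4 * B / A) ^ ((1:ℝ)/3)) 3,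
        ← Real.rpow_mul (by positivity)]
      norm_num
    have hAeq : A = 4 * B / s ^ 3 := by
      have h' : 4 * B = s ^ 3 * A := (div_eq_iff hApos.ne').mp hs3.symm
      rw [eq_div_iff (pow_ne_zero 3 hs.ne')]
      linarith
    have hval : (1/8) * (s ^ 2 * A) + s⁻¹ * B = 3 * B / (2 * s) := by
      rw [hAeq]; field_simp; ring
    have htarget : (3 / (2:ℝ) ^ ((5:ℝ)/3)) * A ^ ((1:ℝ)/3) * B ^ ((2:ℝ)/3) = 3 * B / (2 * s) := by
      have hA13 : A ^ ((1:ℝ)/3) = (2:ℝ) ^ ((2:ℝ)/3) * B ^ ((1:ℝ)/3) / s := by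
        rw [hAeq, Real.div_rpow (by positivity) (by positivity),
          Real.mul_rpow (by norm_num : (0:ℝ) ≤ 4) hBpos.le]
        congr 1
        · congr 1
          rw [show (4:ℝ) = 2 ^ (2:ℕ) by norm_num, ← Real.rpow_natCast 2 2,
            ← Real.rpow_mul (by norm_num : (0:ℝ) ≤ 2)]
          norm_num
        · rw [← Real.rpow_natCast s 3, ← Real.rpow_mul hs.le]
          norm_num
      have hBB : B ^ ((1:ℝ)/3) * B ^ ((2:ℝ)/3) = B := by
        rw [← Real.rpow_add hBpos]; norm_num
      have h25 : (2:ℝ) ^ ((5:ℝ)/3) = 2 * (2:ℝ) ^ ((2:ℝ)/3) := by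
        rw [show (5:ℝ)/3 = 1 + 2/3 by norm_num, Real.rpow_add (by norm_num : (0:ℝ) < 2),
          Real.rpow_one]
      have hc3 : (0:ℝ) < (2:ℝ) ^ ((2:ℝ)/3) := Real.rpow_pos_of_pos (by norm_num) _
      rw [hA13, h25]
      rw [show 3 / (2 * (2:ℝ) ^ ((2:ℝ)/3)) * ((2:ℝ) ^ ((2:ℝ)/3) * B ^ ((1:ℝ)/3) / s)
            * B ^ ((2:ℝ)/3)
          = 3 * (B ^ ((1:ℝ)/3) * B ^ ((2:ℝ)/3)) * ((2:ℝ) ^ ((2:ℝ)/3) / (2:ℝ) ^ ((2:ℝ)/3))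
            / (2 * s) by field_simp, hBB, div_self hc3.ne']
      ring
    exact ⟨s, hs, by rw [hval, htarget]; linarith⟩


/-- **characterization of `c̲`.** Under `(H^V)`,
`c̲ = c⋆ := inf{ (3/2^{5/3})·(|g'|²_{H^{1/2}((-1,1))})^{1/3}·(∫_{-1}^1 V(g))^{2/3} }`
over `g ∈ H^{3/2}_loc(ℝ)` with `g' ∈ H^{1/2}(ℝ)`, `g(-t) = α`, `g(t) = β` for `t ≥ 1`. -/
theorem cLow_eq_cStar (V : ℝ → ℝ) (α β : ℝ) (hV : HypV V α β) :
    cLow V α β = sInf (cStarSet V α β) := by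
  have hV0 : ∀ z, 0 ≤ V z := hV.2.1
  have hLBlow : ∀ e ∈ cLowSet V α β, (0:ℝ) ≤ e := by
    rintro e ⟨f, f', R, hR, hAC, hfin, hbc, rfl⟩
    have h1 : (0:ℝ) ≤ ∫ x in Ioo (-R) R, V (f x) :=
      setIntegral_nonneg measurableSet_Ioo fun x _ => hV0 _
    have h2 : (0:ℝ) ≤ (halfSemi f' (Ioo (-R) R)).toReal := ENNReal.toReal_nonneg
    linarith
  have hLBstar : ∀ e ∈ cStarSet V α β, (0:ℝ) ≤ e := by
    rintro e ⟨g, g', hAC, hfin, hbc, rfl⟩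
    have h1 : (0:ℝ) ≤ ∫ x in Ioo (-1:ℝ) 1, V (g x) :=
      setIntegral_nonneg measurableSet_Ioo fun x _ => hV0 _
    have hc : (0:ℝ) < (2:ℝ) ^ ((5:ℝ)/3) := Real.rpow_pos_of_pos (by norm_num) _
    exact mul_nonneg (mul_nonneg (by positivity)
      (Real.rpow_nonneg ENNReal.toReal_nonneg _)) (Real.rpow_nonneg h1 _)
  have hmapA : ∀ e ∈ cLowSet V α β, ∃ e' ∈ cStarSet V α β, e' ≤ e := by
    rintro e ⟨f, f', R, hR, hAC, hfin, hbc, rfl⟩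
    have hAne : halfSemi f' (Ioo (-R) R) ≠ ⊤ :=
      ne_top_of_le_ne_top hfin
        (lintegral_mono_set (Set.prod_mono (subset_univ _) (subset_univ _)))
    set A' := (halfSemi f' (Ioo (-R) R)).toReal with hA'def
    set B := ∫ x in Ioo (-R) R, V (f x) with hBdef
    have hB : 0 ≤ B := setIntegral_nonneg measurableSet_Ioo fun x _ => hV0 _
    refine ⟨(3 / (2:ℝ) ^ ((5:ℝ)/3)) * A' ^ ((1:ℝ)/3) * B ^ ((2:ℝ)/3), ?_, ?_⟩
    · refine ⟨fun x => f (R * x), fun x => R * f' (R * x),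
        isACProfile_scale hAC hR.ne', ?_, ?_, ?_⟩
      · have h1 := halfSemi_scale f' hR (S := univ) MeasurableSet.univ
        rw [preimage_univ] at h1
        rw [h1]
        exact ENNReal.mul_ne_top ENNReal.ofReal_ne_top hfin
      · intro t ht
        have h1 : R ≤ R * t := by nlinarith
        refine ⟨?_, (hbc (R * t) h1).2⟩
        show f (R * -t) = α
        rw [mul_neg]
        exact (hbc (R * t) h1).1
      · show (3 / (2:ℝ) ^ ((5:ℝ)/3)) * A' ^ ((1:ℝ)/3) * B ^ ((2:ℝ)/3)
          = (3 / (2:ℝ) ^ ((5:ℝ)/3))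
            * (halfSemi (fun x => R * f' (R * x)) (Ioo (-1:ℝ) 1)).toReal ^ ((1:ℝ)/3)
            * (∫ x in Ioo (-1:ℝ) 1, V (f (R * x))) ^ ((2:ℝ)/3)
        have hpre : (fun x => R * x) ⁻¹' (Ioo (-R) R) = Ioo (-1 : ℝ) 1 := by
          rw [preimage_const_mul_Ioo₀ _ _ hR, neg_div, div_self hR.ne']
        have hhs := halfSemi_scale f' hR (S := Ioo (-R) R) measurableSet_Ioo
        rw [hpre] at hhs
        have hint : ∫ x in Ioo (-1:ℝ) 1, V (f (R * x))
            = R⁻¹ * ∫ x in Ioo (-(R * 1)) (R * 1), V (f x) :=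
          setIntegral_scale (fun z => V (f z)) hR zero_le_one
        rw [mul_one] at hint
        rw [hhs, hint, ENNReal.toReal_mul, ENNReal.toReal_ofReal (sq_nonneg R), ← hBdef,
          ← hA'def, mul_assoc, mul_assoc,
          rpow_scale_cancel R A' B hR ENNReal.toReal_nonneg hB]
    · exact amgm_const A' B ENNReal.toReal_nonneg hB
  have hmapB : ∀ e ∈ cStarSet V α β, ∀ ε : ℝ, 0 < ε →
      ∃ e' ∈ cLowSet V α β, e' ≤ e + ε := by
    rintro e ⟨g, g', hAC, hfin, hbc, rfl⟩ ε hε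
    have hAne : halfSemi g' (Ioo (-1:ℝ) 1) ≠ ⊤ :=
      ne_top_of_le_ne_top hfin
        (lintegral_mono_set (Set.prod_mono (subset_univ _) (subset_univ _)))
    set A' := (halfSemi g' (Ioo (-1:ℝ) 1)).toReal with hA'def
    set B := ∫ x in Ioo (-1:ℝ) 1, V (g x) with hBdef
    have hB : 0 ≤ B := setIntegral_nonneg measurableSet_Ioo fun x _ => hV0 _
    obtain ⟨s, hs, hsle⟩ := exists_scale A' B ENNReal.toReal_nonneg hB ε hε
    refine ⟨(1/8) * (s ^ 2 * A') + s⁻¹ * B, ?_, hsle⟩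
    refine ⟨fun x => g (s * x), fun x => s * g' (s * x), s⁻¹, inv_pos.2 hs,
      isACProfile_scale hAC hs.ne', ?_, ?_, ?_⟩
    · have h1 := halfSemi_scale g' hs (S := univ) MeasurableSet.univ
      rw [preimage_univ] at h1
      rw [h1]
      exact ENNReal.mul_ne_top ENNReal.ofReal_ne_top hfin
    · intro t ht
      have h1 : (1:ℝ) ≤ s * t := by
        rw [← mul_inv_cancel₀ hs.ne']
        exact mul_le_mul_of_nonneg_left ht hs.le
      refine ⟨?_, (hbc (s * t) h1).2⟩
      show g (s * -t) = α
      rw [mul_neg]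
      exact (hbc (s * t) h1).1
    · show (1/8) * (s ^ 2 * A') + s⁻¹ * B
        = (1/8) * (halfSemi (fun x => s * g' (s * x)) (Ioo (-(s⁻¹)) s⁻¹)).toReal
          + ∫ x in Ioo (-(s⁻¹)) s⁻¹, V (g (s * x))
      have hpre : (fun x => s * x) ⁻¹' (Ioo (-1:ℝ) 1) = Ioo (-(s⁻¹)) s⁻¹ := by
        rw [preimage_const_mul_Ioo₀ _ _ hs, neg_div, one_div]
      have hhs := halfSemi_scale g' hs (S := Ioo (-1:ℝ) 1) measurableSet_Ioo
      rw [hpre] at hhs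
      have hint : ∫ x in Ioo (-(s⁻¹)) s⁻¹, V (g (s * x))
          = s⁻¹ * ∫ x in Ioo (-(s * s⁻¹)) (s * s⁻¹), V (g x) :=
        setIntegral_scale (fun z => V (g z)) hs (inv_pos.2 hs).le
      rw [mul_inv_cancel₀ hs.ne'] at hint
      rw [hhs, hint, ENNReal.toReal_mul, ENNReal.toReal_ofReal (sq_nonneg s), ← hBdef,
        ← hA'def]
  rcases (cLowSet V α β).eq_empty_or_nonempty with hemp | hne
  · have hemp' : cStarSet V α β = ∅ := by
      by_contra h
      obtain ⟨e, he⟩ := Set.nonempty_iff_ne_empty.2 h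
      obtain ⟨e', he', _⟩ := hmapB e he 1 one_pos
      rw [hemp] at he'
      exact he'
    rw [cLow, hemp, hemp', Real.sInf_empty]
  · have hne' : (cStarSet V α β).Nonempty := by
      obtain ⟨e, he⟩ := hne
      obtain ⟨e', he', _⟩ := hmapA e he
      exact ⟨e', he'⟩
    have hbddS : BddBelow (cStarSet V α β) := ⟨0, fun e he => hLBstar e he⟩
    have hbddL : BddBelow (cLowSet V α β) := ⟨0, fun e he => hLBlow e he⟩
    rw [cLow]
    apply le_antisymm
    · refine le_csInf hne' fun e he => ?_
      refine le_of_forall_pos_le_add fun ε hε => ?_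
      obtain ⟨e', he', hle⟩ := hmapB e he ε hε
      exact (csInf_le hbddL he').trans hle
    · refine le_csInf hne fun e he => ?_
      obtain ⟨e', he', hle⟩ := hmapA e he
      exact (csInf_le hbddS he').trans hle


end
end
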